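/- arXiv:1506.00157 — 2 statements merged into one kernel-verified Lean document; each statement's English description precedes it below -/
import Mathlib

section
/- Let d ≥ 2. For any Lebesgue measurable set E ⊆ ℝ^d with 0 < |E| < ∞, the set E^{†★} satisfies |(E^{†★})^† Δ E^{†★}| = 0 and |(E^{†★})^{†★} Δ E^{†★}| = 0; that is, E^{†★} is invariant (up to Lebesgue null sets) under Schwarz symmetrization and under the composite symmetrization. -/
open MeasureTheory Metric Filter
open scoped ENNReal Pointwise Topology

noncomputable section

abbrev Euc (d : ℕ) : Type := EuclideanSpace ℝ (Fin d)

/-- The Riesz–Sobolev trilinear form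
`𝒯(E₁,E₂,E₃) = ∫∫ 1_{E₁}(x) 1_{E₂}(y) 1_{E₃}(-x-y) dx dy`. -/
noncomputable def Ttri {d : ℕ} (E₁ E₂ E₃ : Set (Euc d)) : ℝ :=
  ∫ x : Euc d, ∫ y : Euc d,
    E₁.indicator (fun _ => (1:ℝ)) x * E₂.indicator (fun _ => (1:ℝ)) y *
      E₃.indicator (fun _ => (1:ℝ)) (-x - y)

/-- `E^•` : the closed ball centered at `0` with the same volume as `E`. -/
noncomputable def ballSym {d : ℕ} (E : Set (Euc d)) : Set (Euc d) :=
  Metric.closedBall 0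
    (((volume E).toReal / (volume (Metric.closedBall (0 : Euc d) 1)).toReal) ^ (1 / (d:ℝ)))

/-- `τ`-admissibility of an ordered triple of positive reals. -/
def TauAdm (τ r₁ r₂ r₃ : ℝ) : Prop :=
  0 < r₁ ∧ 0 < r₂ ∧ 0 < r₃ ∧
  r₁ + r₂ ≥ r₃ + τ * max r₁ (max r₂ r₃) ∧
  r₂ + r₃ ≥ r₁ + τ * max r₁ (max r₂ r₃) ∧
  r₁ + r₃ ≥ r₂ + τ * max r₁ (max r₂ r₃)

/-- `τ`-admissibility of an ordered triple of sets. -/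
def TauAdmSets (d : ℕ) (τ : ℝ) (E₁ E₂ E₃ : Set (Euc d)) : Prop :=
  TauAdm τ ((volume E₁).toReal ^ (1/(d:ℝ))) ((volume E₂).toReal ^ (1/(d:ℝ)))
    ((volume E₃).toReal ^ (1/(d:ℝ)))

/-- Strict admissibility of a triple of positive reals. -/
def StrictAdm (r₁ r₂ r₃ : ℝ) : Prop :=
  0 < r₁ ∧ 0 < r₂ ∧ 0 < r₃ ∧ r₁ < r₂ + r₃ ∧ r₂ < r₁ + r₃ ∧ r₃ < r₁ + r₂

/-- An ellipsoid: image of the closed unit ball under an invertible affine map. -/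
def IsEllipsoid (d : ℕ) (S : Set (Euc d)) : Prop :=
  ∃ (A : Euc d ≃ₗ[ℝ] Euc d) (v : Euc d),
    S = (fun x => A x + v) '' Metric.closedBall 0 1

/-- An ellipsoid centered at `0`. -/
def IsCenteredEllipsoid (d : ℕ) (S : Set (Euc d)) : Prop :=
  ∃ A : Euc d ≃ₗ[ℝ] Euc d, S = (fun x => A x) '' Metric.closedBall 0 1

/-- Assemble a point of `ℝ^d` from its first `d-1` coordinates and its last one. -/
def join (d : ℕ) (x' : Euc (d-1)) (t : ℝ) : Euc d :=
  WithLp.toLp 2 (fun i : Fin d => if h : (i:ℕ) < d - 1 then x' ⟨i, h⟩ else t)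

/-- The first `d-1` coordinates. -/
def projHead (d : ℕ) (x : Euc d) : Euc (d-1) :=
  WithLp.toLp 2 (fun i : Fin (d-1) => x ⟨i, lt_of_lt_of_le i.2 (Nat.sub_le d 1)⟩)

/-- The last coordinate. -/
def lastC (d : ℕ) (x : Euc d) : ℝ :=
  if h : 0 < d then x ⟨d-1, Nat.sub_lt h one_pos⟩ else 0

/-- Vertical slice `E^{x'} = {t : (x',t) ∈ E}`. -/
def sliceV (d : ℕ) (E : Set (Euc d)) (x' : Euc (d-1)) : Set ℝ :=
  {t : ℝ | join d x' t ∈ E}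

/-- Horizontal slice `E_t = {y' : (y',t) ∈ E}`. -/
def sliceH (d : ℕ) (E : Set (Euc d)) (t : ℝ) : Set (Euc (d-1)) :=
  {y' | join d y' t ∈ E}

/-- Steiner symmetrization in the last coordinate. -/
noncomputable def steiner (d : ℕ) (E : Set (Euc d)) : Set (Euc d) :=
  {x | ∃ x' t, x = join d x' t ∧ 0 < volume (sliceV d E x') ∧
      ENNReal.ofReal (2 * |t|) ≤ volume (sliceV d E x')}

/-- Schwarz symmetrization in the first `d-1` coordinates. -/
noncomputable def schwarz (d : ℕ) (E : Set (Euc d)) : Set (Euc d) :=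
  {x | ∃ x' t, x = join d x' t ∧ 0 < volume (sliceH d E t) ∧
      ENNReal.ofReal
        ((volume (Metric.closedBall (0 : Euc (d-1)) 1)).toReal * ‖x'‖ ^ (d-1))
        ≤ volume (sliceH d E t)}

/-- `E^{†★} = (E^†)^★`. -/
noncomputable def dagStar (d : ℕ) (E : Set (Euc d)) : Set (Euc d) :=
  steiner d (schwarz d E)

/-- `E'_k = {x' : 2^k ≤ |E^{x'}| < 2^{k+1}}`. -/
noncomputable def layerBase (d : ℕ) (E : Set (Euc d)) (k : ℤ) : Set (Euc (d-1)) :=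
  {x' | ENNReal.ofReal ((2:ℝ) ^ k) ≤ volume (sliceV d E x') ∧
        volume (sliceV d E x') < ENNReal.ofReal ((2:ℝ) ^ (k+1))}

/-- `E_k = {x ∈ E : x' ∈ E'_k}`. -/
noncomputable def layer (d : ℕ) (E : Set (Euc d)) (k : ℤ) : Set (Euc d) :=
  {x ∈ E | projHead d x ∈ layerBase d E k}

/-- A special dilation `(x₁,…,x_d) ↦ (r x₁,…, r x_{d-1}, ρ x_d)`. -/
def spDil (d : ℕ) (r ρ : ℝ) (x : Euc d) : Euc d :=
  WithLp.toLp 2 (fun i : Fin d => if (i:ℕ) < d - 1 then r * x i else ρ * x i)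

/-- A vertical skew-shift `(x', x_d) ↦ (x', x_d + ℓ(x'))`. -/
noncomputable def skewShift (d : ℕ) (ℓ : Euc (d-1) →ᵃ[ℝ] ℝ) (x : Euc d) : Euc d :=
  join d (projHead d x) (lastC d x + ℓ (projHead d x))

/-- Assemble a point of `ℝ^d = ℝ^{d-k} × ℝ^k`. -/
def joinP (d k : ℕ) (y : Euc (d-k)) (z : Euc k) : Euc d :=
  WithLp.toLp 2 (fun i : Fin d => if h : (i:ℕ) < d - k then y ⟨i, h⟩
    else if h2 : (i:ℕ) - (d-k) < k then z ⟨(i:ℕ) - (d-k), h2⟩ else 0)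

/-- Slice `E^{y} = {z ∈ ℝ^k : (y,z) ∈ E}`. -/
def sliceK (d k : ℕ) (E : Set (Euc d)) (y : Euc (d-k)) : Set (Euc k) :=
  {z | joinP d k y z ∈ E}

/-- Projection `π(E) = {y : E^y ≠ ∅}`. -/
def projK (d k : ℕ) (E : Set (Euc d)) : Set (Euc (d-k)) :=
  {y | (sliceK d k E y).Nonempty}

/-- The closed ball centered at `0` of prescribed volume `γ` (a point if `γ = 0`). -/
noncomputable def ballOfVol (d : ℕ) (γ : ℝ) : Set (Euc d) :=
  Metric.closedBall 0
    ((γ / (volume (Metric.closedBall (0 : Euc d) 1)).toReal) ^ (1/(d:ℝ)))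

/-- `Λ_d(γ₁,γ₂,γ₃) = 𝒯(B₁,B₂,B₃)` for balls of volumes `γ_j` centered at `0`. -/
noncomputable def Lam (d : ℕ) (γ₁ γ₂ γ₃ : ℝ) : ℝ :=
  Ttri (ballOfVol d γ₁) (ballOfVol d γ₂) (ballOfVol d γ₃)

/-- `rℰ + v`. -/
def scaleShift (d : ℕ) (r : ℝ) (v : Euc d) (S : Set (Euc d)) : Set (Euc d) :=
  (fun x => r • x + v) '' S

end

/-! ### Auxiliary lemmas for `dagStar_idempotent` -/

namespace DagStarAux

open Set

variable {n : ℕ}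

theorem projHead_join (x' : Euc n) (t : ℝ) : projHead (n+1) (join (n+1) x' t) = x' := by
  ext i
  simp only [projHead, _root_.join, WithLp.ofLp_toLp]
  rw [dif_pos i.2]

theorem lastC_join (x' : Euc n) (t : ℝ) : lastC (n+1) (join (n+1) x' t) = t := by
  simp only [lastC, _root_.join, Nat.succ_sub_one]
  rw [dif_pos (Nat.succ_pos n), dif_neg (lt_irrefl n)]

theorem join_projHead_lastC (x : Euc (n+1)) :
    join (n+1) (projHead (n+1) x) (lastC (n+1) x) = x := by
  ext i
  simp only [_root_.join, projHead, lastC, Nat.succ_sub_one, WithLp.ofLp_toLp]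
  rw [dif_pos (Nat.succ_pos n)]
  split
  · rfl
  · next h =>
      refine congrArg x.ofLp ?_
      exact Fin.ext (show n = (i:ℕ) by omega)

theorem measurePreserving_join (n : ℕ) :
    MeasurePreserving (fun p : Euc n × ℝ => join (n+1) p.1 p.2)
      (volume : Measure (Euc n × ℝ)) (volume : Measure (Euc (n+1))) := by
  have h1 : MeasurePreserving
      (Prod.map (⇑(MeasurableEquiv.toLp 2 (Fin n → ℝ)).symm) (id : ℝ → ℝ))
      (volume : Measure (Euc n × ℝ)) (volume : Measure ((Fin n → ℝ) × ℝ)) :=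
    (EuclideanSpace.volume_preserving_symm_measurableEquiv_toLp (Fin n)).prod (MeasurePreserving.id _)
  have h2 : MeasurePreserving (Prod.swap : (Fin n → ℝ) × ℝ → ℝ × (Fin n → ℝ))
      volume volume := Measure.measurePreserving_swap
  have h3 : MeasurePreserving
      ((MeasurableEquiv.piFinSuccAbove (fun _ : Fin (n+1) => ℝ) (Fin.last n)).symm)
      volume volume :=
    (volume_preserving_piFinSuccAbove (fun _ : Fin (n+1) => ℝ) (Fin.last n)).symm
  have h4 : MeasurePreserving
      ((MeasurableEquiv.toLp 2 (Fin (n+1) → ℝ)).symm.symm)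
      volume volume :=
    (EuclideanSpace.volume_preserving_symm_measurableEquiv_toLp (Fin (n+1))).symm _
  have hc := ((h4.comp h3).comp h2).comp h1
  convert hc using 1
  funext p
  show join (n+1) p.1 p.2 = _
  simp only [Function.comp_apply, Prod.map_apply, Prod.swap_prod_mk, id_eq]
  ext i
  show _ = (MeasurableEquiv.piFinSuccAbove (fun _ : Fin (n+1) => ℝ) (Fin.last n)).symm _ i
  rw [MeasurableEquiv.piFinSuccAbove_symm_apply]
  simp only [_root_.join, Nat.succ_sub_one, WithLp.ofLp_toLp, Fin.insertNthEquiv_apply, Prod.map_apply,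
    Prod.swap_prod_mk, id_eq]
  rcases Nat.lt_or_ge (i : ℕ) n with h | h
  · rw [dif_pos h]
    have hi : i = (Fin.last n).succAbove ⟨i, h⟩ := by
      rw [Fin.succAbove_last]; exact Fin.ext rfl
    conv_rhs => rw [hi, Fin.insertNth_apply_succAbove]
    rfl
  · rw [dif_neg (by omega)]
    have hi : i = Fin.last n := Fin.ext (by simp only [Fin.val_last]; omega)
    conv_rhs => rw [hi, Fin.insertNth_apply_same]
    rfl

theorem sliceV_eq_preimage (S : Set (Euc (n+1))) (x' : Euc n) :
    sliceV (n+1) S x' = Prod.mk x' ⁻¹' ((fun p : Euc n × ℝ => join (n+1) p.1 p.2) ⁻¹' S) := rfl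

theorem sliceH_eq_preimage (S : Set (Euc (n+1))) (t : ℝ) :
    sliceH (n+1) S t = (fun x' : Euc n => (x', t)) ⁻¹' ((fun p : Euc n × ℝ => join (n+1) p.1 p.2) ⁻¹' S) := rfl

theorem measurable_vol_sliceH {S : Set (Euc (n+1))} (hS : MeasurableSet S) :
    Measurable fun t => volume (sliceH (n+1) S t) := by
  have hS' : MeasurableSet ((fun p : Euc n × ℝ => join (n+1) p.1 p.2) ⁻¹' S) :=
    (measurePreserving_join n).measurable hS
  exact measurable_measure_prodMk_right (μ := (volume : Measure (Euc n))) hS'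

theorem measurable_vol_sliceV {S : Set (Euc (n+1))} (hS : MeasurableSet S) :
    Measurable fun x' : Euc n => volume (sliceV (n+1) S x') := by
  have hS' : MeasurableSet ((fun p : Euc n × ℝ => join (n+1) p.1 p.2) ⁻¹' S) :=
    (measurePreserving_join n).measurable hS
  exact measurable_measure_prodMk_left (ν := (volume : Measure ℝ)) hS'

theorem vol_eq_lintegral_sliceH {S : Set (Euc (n+1))} (hS : MeasurableSet S) :
    volume S = ∫⁻ t : ℝ, volume (sliceH (n+1) S t) := by
  rw [← (measurePreserving_join n).measure_preimage hS.nullMeasurableSet,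
    Measure.volume_eq_prod,
    Measure.prod_apply_symm ((measurePreserving_join n).measurable hS)]
  rfl

theorem vol_eq_lintegral_sliceV {S : Set (Euc (n+1))} (hS : MeasurableSet S) :
    volume S = ∫⁻ x' : Euc n, volume (sliceV (n+1) S x') := by
  rw [← (measurePreserving_join n).measure_preimage hS.nullMeasurableSet,
    Measure.volume_eq_prod,
    Measure.prod_apply ((measurePreserving_join n).measurable hS)]
  rfl

theorem mem_steiner_iff {S : Set (Euc (n+1))} {x : Euc (n+1)} :
    x ∈ steiner (n+1) S ↔ 0 < volume (sliceV (n+1) S (projHead (n+1) x)) ∧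
      ENNReal.ofReal (2 * |lastC (n+1) x|) ≤ volume (sliceV (n+1) S (projHead (n+1) x)) := by
  constructor
  · rintro ⟨x', t, rfl, h1, h2⟩
    rw [projHead_join, lastC_join]; exact ⟨h1, h2⟩
  · intro h
    exact ⟨projHead (n+1) x, lastC (n+1) x, (join_projHead_lastC x).symm, h.1, h.2⟩

theorem mem_schwarz_iff {S : Set (Euc (n+1))} {x : Euc (n+1)} :
    x ∈ schwarz (n+1) S ↔ 0 < volume (sliceH (n+1) S (lastC (n+1) x)) ∧
      ENNReal.ofReal ((volume (Metric.closedBall (0 : Euc n) 1)).toReal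
          * ‖projHead (n+1) x‖ ^ n) ≤ volume (sliceH (n+1) S (lastC (n+1) x)) := by
  constructor
  · rintro ⟨x', t, rfl, h1, h2⟩
    rw [projHead_join, lastC_join]; exact ⟨h1, h2⟩
  · intro h
    exact ⟨projHead (n+1) x, lastC (n+1) x, (join_projHead_lastC x).symm, h.1, h.2⟩

theorem sliceH_schwarz (S : Set (Euc (n+1))) (t : ℝ) :
    sliceH (n+1) (schwarz (n+1) S) t = {x' : Euc n | 0 < volume (sliceH (n+1) S t) ∧
      ENNReal.ofReal ((volume (Metric.closedBall (0 : Euc n) 1)).toReal * ‖x'‖ ^ n)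
        ≤ volume (sliceH (n+1) S t)} := by
  ext x'
  show join (n+1) x' t ∈ schwarz (n+1) S ↔ _
  rw [mem_schwarz_iff, projHead_join, lastC_join]
  rfl

theorem sliceV_schwarz (S : Set (Euc (n+1))) (x' : Euc n) :
    sliceV (n+1) (schwarz (n+1) S) x' = {t : ℝ | 0 < volume (sliceH (n+1) S t) ∧
      ENNReal.ofReal ((volume (Metric.closedBall (0 : Euc n) 1)).toReal * ‖x'‖ ^ n)
        ≤ volume (sliceH (n+1) S t)} := by
  ext t
  show join (n+1) x' t ∈ schwarz (n+1) S ↔ _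
  rw [mem_schwarz_iff, projHead_join, lastC_join]
  rfl

theorem sliceH_steiner (S : Set (Euc (n+1))) (t : ℝ) :
    sliceH (n+1) (steiner (n+1) S) t = {x' : Euc n | 0 < volume (sliceV (n+1) S x') ∧
      ENNReal.ofReal (2 * |t|) ≤ volume (sliceV (n+1) S x')} := by
  ext x'
  show join (n+1) x' t ∈ steiner (n+1) S ↔ _
  rw [mem_steiner_iff, projHead_join, lastC_join]
  rfl

theorem sliceV_steiner (S : Set (Euc (n+1))) (x' : Euc n) :
    sliceV (n+1) (steiner (n+1) S) x' = {t : ℝ | 0 < volume (sliceV (n+1) S x') ∧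
      ENNReal.ofReal (2 * |t|) ≤ volume (sliceV (n+1) S x')} := by
  ext t
  show join (n+1) x' t ∈ steiner (n+1) S ↔ _
  rw [mem_steiner_iff, projHead_join, lastC_join]
  rfl

theorem volume_sliceV_steiner (S : Set (Euc (n+1))) (x' : Euc n) :
    volume (sliceV (n+1) (steiner (n+1) S) x') = volume (sliceV (n+1) S x') := by
  rw [sliceV_steiner]
  set a := volume (sliceV (n+1) S x') with ha
  rcases eq_or_ne a 0 with h0 | h0
  · rw [h0]
    convert measure_empty
    · ext t; simp [h0]
    · infer_instance
  rcases eq_or_ne a ⊤ with htop | htop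
  · rw [htop]
    have : {t : ℝ | 0 < (⊤:ℝ≥0∞) ∧ ENNReal.ofReal (2 * |t|) ≤ ⊤} = Set.univ := by
      ext t; simp
    rw [this, Real.volume_univ]
  · have hpos : 0 < a := pos_iff_ne_zero.mpr h0
    have hset : {t : ℝ | 0 < a ∧ ENNReal.ofReal (2 * |t|) ≤ a}
        = Set.Icc (-(a.toReal/2)) (a.toReal/2) := by
      ext t
      simp only [Set.mem_setOf_eq, hpos, true_and, Set.mem_Icc]
      rw [ENNReal.ofReal_le_iff_le_toReal htop]
      constructor
      · intro h
        have h2 : |t| ≤ a.toReal / 2 := by linarith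
        exact ⟨by linarith [(abs_le.mp h2).1], (abs_le.mp h2).2⟩
      · intro h
        have : |t| ≤ a.toReal / 2 := abs_le.mpr ⟨by linarith [h.1], h.2⟩
        linarith
    rw [hset, Real.volume_Icc, show a.toReal/2 - -(a.toReal/2) = a.toReal by ring,
      ENNReal.ofReal_toReal htop]

theorem steiner_steiner (S : Set (Euc (n+1))) :
    steiner (n+1) (steiner (n+1) S) = steiner (n+1) S := by
  ext x
  rw [mem_steiner_iff, mem_steiner_iff, volume_sliceV_steiner]

theorem measurable_lastC : Measurable (lastC (n+1) : Euc (n+1) → ℝ) := by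
  have h : Measurable fun x : Euc (n+1) =>
      ((MeasurableEquiv.toLp 2 (Fin (n+1) → ℝ)).symm x) (Fin.last n) :=
    (measurable_pi_apply (Fin.last n)).comp
      (MeasurableEquiv.toLp 2 (Fin (n+1) → ℝ)).symm.measurable
  have he : (lastC (n+1) : Euc (n+1) → ℝ) = fun x : Euc (n+1) =>
      ((MeasurableEquiv.toLp 2 (Fin (n+1) → ℝ)).symm x) (Fin.last n) := by
    funext x
    simp only [lastC, Nat.succ_sub_one]
    rw [dif_pos (Nat.succ_pos n)]
    rfl
  rw [he]; exact h

theorem measurable_projHead : Measurable (projHead (n+1) : Euc (n+1) → Euc n) := by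
  have h : Measurable fun x : Euc (n+1) =>
      (MeasurableEquiv.toLp 2 (Fin n → ℝ)).symm.symm
        (fun i : Fin n => x ⟨(i:ℕ), lt_of_lt_of_le i.2 (Nat.sub_le (n+1) 1)⟩) := by
    apply (MeasurableEquiv.toLp 2 (Fin n → ℝ)).symm.symm.measurable.comp
    apply measurable_pi_lambda
    intro i
    exact (measurable_pi_apply _).comp (MeasurableEquiv.toLp 2 (Fin (n+1) → ℝ)).symm.measurable
  exact h

theorem measurableSet_schwarz {S : Set (Euc (n+1))} (hS : MeasurableSet S) :
    MeasurableSet (schwarz (n+1) S) := by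
  have heq : schwarz (n+1) S = {x : Euc (n+1) |
      0 < volume (sliceH (n+1) S (lastC (n+1) x)) ∧
      ENNReal.ofReal ((volume (Metric.closedBall (0 : Euc n) 1)).toReal
        * ‖projHead (n+1) x‖ ^ n) ≤ volume (sliceH (n+1) S (lastC (n+1) x))} := by
    ext x; exact mem_schwarz_iff
  rw [heq]
  have hv : Measurable fun x : Euc (n+1) => volume (sliceH (n+1) S (lastC (n+1) x)) :=
    (measurable_vol_sliceH hS).comp measurable_lastC
  have hc : Measurable fun x : Euc (n+1) => ENNReal.ofReal
      ((volume (Metric.closedBall (0 : Euc n) 1)).toReal * ‖projHead (n+1) x‖ ^ n) :=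
    ENNReal.measurable_ofReal.comp
      (measurable_const.mul ((measurable_norm.comp measurable_projHead).pow_const n))
  have m1 := measurableSet_lt (measurable_const (a := (0:ℝ≥0∞))) hv
  have m2 := measurableSet_le hc hv
  exact m1.inter m2

theorem measurableSet_steiner {S : Set (Euc (n+1))} (hS : MeasurableSet S) :
    MeasurableSet (steiner (n+1) S) := by
  have heq : steiner (n+1) S = {x : Euc (n+1) |
      0 < volume (sliceV (n+1) S (projHead (n+1) x)) ∧
      ENNReal.ofReal (2 * |lastC (n+1) x|)
        ≤ volume (sliceV (n+1) S (projHead (n+1) x))} := by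
    ext x; exact mem_steiner_iff
  rw [heq]
  have hv : Measurable fun x : Euc (n+1) => volume (sliceV (n+1) S (projHead (n+1) x)) :=
    (measurable_vol_sliceV hS).comp measurable_projHead
  have hc : Measurable fun x : Euc (n+1) => ENNReal.ofReal (2 * |lastC (n+1) x|) :=
    ENNReal.measurable_ofReal.comp (measurable_const.mul measurable_lastC.abs)
  have m1 := measurableSet_lt (measurable_const (a := (0:ℝ≥0∞))) hv
  have m2 := measurableSet_le hc hv
  exact m1.inter m2

theorem volume_univ_euc (hn : 1 ≤ n) : volume (Set.univ : Set (Euc n)) = ⊤ := by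
  haveI : Nonempty (Fin n) := ⟨⟨0, hn⟩⟩
  have h := (EuclideanSpace.volume_preserving_symm_measurableEquiv_toLp (Fin n)).measure_preimage
      (MeasurableSet.univ.nullMeasurableSet (μ := (volume : Measure (Fin n → ℝ))))
  rw [Set.preimage_univ] at h
  rw [h, volume_pi, Measure.pi_univ]
  simp only [Real.volume_univ, Finset.prod_const, Finset.card_univ, Fintype.card_fin]
  exact ENNReal.top_pow (by omega)

example {α : Type*} [MeasurableSpace α] (f g : α → ℝ≥0∞) (hf : Measurable f) (hg : Measurable g) :
    MeasurableSet {x | f x ≤ g x} := measurableSet_le hf hg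

theorem volume_closedBall_euc (hn : 1 ≤ n) {r : ℝ} (hr : 0 ≤ r) :
    volume (Metric.closedBall (0 : Euc n) r)
      = ENNReal.ofReal ((volume (Metric.closedBall (0 : Euc n) 1)).toReal * r ^ n) := by
  have hfin : volume (Metric.closedBall (0 : Euc n) 1) ≠ ⊤ :=
    (measure_closedBall_lt_top).ne
  haveI : Nonempty (Fin n) := ⟨⟨0, hn⟩⟩
  haveI : Nontrivial (Euc n) := inferInstance
  rw [Measure.addHaar_closedBall _ _ hr, finrank_euclideanSpace_fin,
    ← Measure.addHaar_closedBall_eq_addHaar_ball,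
    ENNReal.ofReal_mul ENNReal.toReal_nonneg, ENNReal.ofReal_toReal hfin, mul_comm]

theorem volume_ball_euc (hn : 1 ≤ n) {r : ℝ} (hr : 0 ≤ r) :
    volume (Metric.ball (0 : Euc n) r)
      = ENNReal.ofReal ((volume (Metric.closedBall (0 : Euc n) 1)).toReal * r ^ n) := by
  haveI : Nonempty (Fin n) := ⟨⟨0, hn⟩⟩
  haveI : Nontrivial (Euc n) := inferInstance
  rw [← Measure.addHaar_closedBall_eq_addHaar_ball]
  exact volume_closedBall_euc hn hr

theorem radial_null (hn : 1 ≤ n) (A : Set (Euc n))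
    (hA : ∀ x' y' : Euc n, ‖y'‖ ≤ ‖x'‖ → x' ∈ A → y' ∈ A) :
    volume (symmDiff {x' : Euc n | 0 < volume A ∧
      ENNReal.ofReal ((volume (Metric.closedBall (0 : Euc n) 1)).toReal * ‖x'‖ ^ n)
        ≤ volume A} A) = 0 := by
  haveI : Nonempty (Fin n) := ⟨⟨0, hn⟩⟩
  haveI : Nontrivial (Euc n) := inferInstance
  set ω : ℝ := (volume (Metric.closedBall (0 : Euc n) 1)).toReal with hω
  have hωpos : 0 < ω := ENNReal.toReal_pos
    (measure_closedBall_pos volume (0 : Euc n) one_pos).ne' measure_closedBall_lt_top.ne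
  rcases Set.eq_empty_or_nonempty A with rfl | hAne
  · have hB : {x' : Euc n | 0 < volume (∅ : Set (Euc n)) ∧
        ENNReal.ofReal (ω * ‖x'‖ ^ n) ≤ volume (∅ : Set (Euc n))} = ∅ := by
      ext x'; simp
    rw [hB, symmDiff_self]
    exact measure_empty
  by_cases hbd : ∃ R : ℝ, ∀ x' ∈ A, ‖x'‖ ≤ R
  · -- bounded case
    obtain ⟨R, hR⟩ := hbd
    set S : Set ℝ := (fun x' : Euc n => ‖x'‖) '' A with hSdef
    have hSne : S.Nonempty := hAne.image _
    have hSbd : BddAbove S := ⟨R, by rintro r ⟨x, hx, rfl⟩; exact hR x hx⟩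
    set s : ℝ := sSup S with hs
    obtain ⟨x₀, hx₀⟩ := hAne
    have hs0 : 0 ≤ s := le_trans (norm_nonneg x₀) (le_csSup hSbd ⟨x₀, hx₀, rfl⟩)
    have hsub : A ⊆ Metric.closedBall 0 s := by
      intro x hx
      rw [Metric.mem_closedBall, dist_zero_right]
      exact le_csSup hSbd ⟨x, hx, rfl⟩
    have hball : Metric.ball 0 s ⊆ A := by
      intro y hy
      rw [Metric.mem_ball, dist_zero_right] at hy
      obtain ⟨r, ⟨x, hx, rfl⟩, hlt⟩ := exists_lt_of_lt_csSup hSne hy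
      exact hA x y hlt.le hx
    have hvolA : volume A = ENNReal.ofReal (ω * s ^ n) := by
      refine le_antisymm ?_ ?_
      · have := measure_mono (μ := (volume : Measure (Euc n))) hsub
        rwa [volume_closedBall_euc hn hs0] at this
      · have := measure_mono (μ := (volume : Measure (Euc n))) hball
        rwa [volume_ball_euc hn hs0] at this
    rcases eq_or_lt_of_le hs0 with hseq | hspos
    · -- s = 0
      have hA0 : volume A = 0 := by
        rw [hvolA, ← hseq, zero_pow (by omega), mul_zero, ENNReal.ofReal_zero]
      have hB : {x' : Euc n | 0 < volume A ∧
          ENNReal.ofReal (ω * ‖x'‖ ^ n) ≤ volume A} = ∅ := by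
        ext x'; simp [hA0]
      rw [hB, Set.symmDiff_def]
      simp only [Set.empty_diff, Set.diff_empty, Set.empty_union, Set.union_empty]
      exact hA0
    · -- s > 0
      have hB : {x' : Euc n | 0 < volume A ∧
          ENNReal.ofReal (ω * ‖x'‖ ^ n) ≤ volume A} = Metric.closedBall 0 s := by
        ext x'
        simp only [Set.mem_setOf_eq, hvolA, Metric.mem_closedBall, dist_zero_right]
        have htri : 0 < ENNReal.ofReal (ω * s ^ n) := ENNReal.ofReal_pos.mpr (by positivity)
        rw [ENNReal.ofReal_le_ofReal_iff (by positivity)]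
        constructor
        · intro h
          have h2 : ‖x'‖ ^ n ≤ s ^ n := le_of_mul_le_mul_left h.2 hωpos
          exact (pow_le_pow_iff_left₀ (norm_nonneg _) hs0 (by omega)).mp h2
        · intro h
          exact ⟨htri, mul_le_mul_of_nonneg_left (pow_le_pow_left₀ (norm_nonneg _) h n) hωpos.le⟩
      rw [hB]
      have hsd : symmDiff (Metric.closedBall (0 : Euc n) s) A
          ⊆ Metric.closedBall (0 : Euc n) s \ Metric.ball 0 s := by
        rw [Set.symmDiff_def]
        apply Set.union_subset
        · exact Set.diff_subset_diff (le_refl _) hball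
        · exact Set.diff_subset_diff hsub Metric.ball_subset_closedBall
      refine le_antisymm (le_trans (measure_mono hsd) ?_) zero_le
      rw [measure_diff Metric.ball_subset_closedBall measurableSet_ball.nullMeasurableSet
        (by rw [volume_ball_euc hn hs0]; exact ENNReal.ofReal_ne_top),
        volume_closedBall_euc hn hs0, volume_ball_euc hn hs0, tsub_self]
  · -- unbounded case
    push_neg at hbd
    have hAuniv : A = Set.univ := by
      rw [Set.eq_univ_iff_forall]
      intro y
      obtain ⟨x, hx, hlt⟩ := hbd ‖y‖
      exact hA x y hlt.le hx
    have hvolA : volume A = ⊤ := by rw [hAuniv]; exact volume_univ_euc hn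
    have hB : {x' : Euc n | 0 < volume A ∧
        ENNReal.ofReal (ω * ‖x'‖ ^ n) ≤ volume A} = Set.univ := by
      ext x'; simp [hvolA]
    rw [hB, hAuniv, symmDiff_self]
    simp

end DagStarAux
open DagStarAux in
/-- Lemma 4.4: `E^{†★}` is idempotent under `†` and `†★`, up to null sets. -/
theorem dagStar_idempotent (d : ℕ) (hd : 2 ≤ d) (E : Set (Euc d))
    (hE : MeasurableSet E) (h0 : 0 < volume E) (hfin : volume E < ⊤) :
    volume (symmDiff (schwarz d (dagStar d E)) (dagStar d E)) = 0 ∧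
    volume (symmDiff (dagStar d (dagStar d E)) (dagStar d E)) = 0 := by
  obtain ⟨n, rfl⟩ : ∃ n, d = n + 1 := ⟨d - 1, by omega⟩
  have hn : 1 ≤ n := by omega
  have hFmeas : MeasurableSet (schwarz (n+1) E) := measurableSet_schwarz hE
  have hGmeas : MeasurableSet (dagStar (n+1) E) := measurableSet_steiner hFmeas
  set G := dagStar (n+1) E with hGdef
  have hHmeas : MeasurableSet (schwarz (n+1) G) := measurableSet_schwarz hGmeas
  have hdag : dagStar (n+1) E = steiner (n+1) (schwarz (n+1) E) := rfl
  -- radial structure of horizontal slices of `G`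
  have hrad : ∀ t : ℝ, ∀ x' y' : Euc n, ‖y'‖ ≤ ‖x'‖ →
      x' ∈ sliceH (n+1) G t → y' ∈ sliceH (n+1) G t := by
    intro t x' y' hle hx
    have hmono : volume (sliceV (n+1) (schwarz (n+1) E) x')
        ≤ volume (sliceV (n+1) (schwarz (n+1) E) y') := by
      apply measure_mono (μ := (volume : Measure ℝ))
      rw [sliceV_schwarz, sliceV_schwarz]
      intro τ hτ
      exact ⟨hτ.1, le_trans (le_trans (ENNReal.ofReal_le_ofReal
        (mul_le_mul_of_nonneg_left (pow_le_pow_left₀ (norm_nonneg _) hle n)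
          ENNReal.toReal_nonneg)) hτ.2) (le_refl _)⟩
    rw [hGdef, hdag, sliceH_steiner] at hx ⊢
    exact ⟨lt_of_lt_of_le hx.1 hmono, le_trans hx.2 hmono⟩
  -- Part 1
  have part1 : volume (symmDiff (schwarz (n+1) G) G) = 0 := by
    have hsd : MeasurableSet (symmDiff (schwarz (n+1) G) G) := hHmeas.symmDiff hGmeas
    rw [vol_eq_lintegral_sliceH hsd]
    have hz : ∀ t : ℝ, volume (sliceH (n+1) (symmDiff (schwarz (n+1) G) G) t) = 0 := by
      intro t
      have hsplit : sliceH (n+1) (symmDiff (schwarz (n+1) G) G) t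
          = symmDiff (sliceH (n+1) (schwarz (n+1) G) t) (sliceH (n+1) G t) :=
        Set.preimage_symmDiff _ _
      rw [hsplit, sliceH_schwarz]
      exact radial_null hn _ (hrad t)
    simp only [hz]
    exact lintegral_zero
  have hGst : steiner (n+1) G = G := by
    rw [hGdef]
    exact steiner_steiner (schwarz (n+1) E)
  -- Part 2
  have part2 : volume (symmDiff (steiner (n+1) (schwarz (n+1) G)) G) = 0 := by
    have hstHmeas : MeasurableSet (steiner (n+1) (schwarz (n+1) G)) :=
      measurableSet_steiner hHmeas
    have hsd : MeasurableSet (symmDiff (schwarz (n+1) G) G) := hHmeas.symmDiff hGmeas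
    have h00 : ∫⁻ x' : Euc n, volume (sliceV (n+1) (symmDiff (schwarz (n+1) G) G) x') = 0 := by
      rw [← vol_eq_lintegral_sliceV hsd]; exact part1
    have hmeas' : Measurable fun x' : Euc n =>
        volume (sliceV (n+1) (symmDiff (schwarz (n+1) G) G) x') := measurable_vol_sliceV hsd
    have hae := (lintegral_eq_zero_iff hmeas').mp h00
    have hae2 : ∀ᵐ x' : Euc n, volume (sliceV (n+1) (schwarz (n+1) G) x')
        = volume (sliceV (n+1) G x') := by
      filter_upwards [hae] with x' hx'
      simp only [Pi.zero_apply] at hx'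
      have hsplit : sliceV (n+1) (symmDiff (schwarz (n+1) G) G) x'
          = symmDiff (sliceV (n+1) (schwarz (n+1) G) x') (sliceV (n+1) G x') :=
        Set.preimage_symmDiff _ _
      rw [hsplit] at hx'
      exact measure_congr (measure_symmDiff_eq_zero_iff.mp hx')
    have hsd2 : MeasurableSet (symmDiff (steiner (n+1) (schwarz (n+1) G)) G) :=
      hstHmeas.symmDiff hGmeas
    rw [vol_eq_lintegral_sliceV hsd2]
    have haez : ∀ᵐ x' : Euc n,
        volume (sliceV (n+1) (symmDiff (steiner (n+1) (schwarz (n+1) G)) G) x') = 0 := by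
      filter_upwards [hae2] with x' hx'
      have hsplit : sliceV (n+1) (symmDiff (steiner (n+1) (schwarz (n+1) G)) G) x'
          = symmDiff (sliceV (n+1) (steiner (n+1) (schwarz (n+1) G)) x') (sliceV (n+1) G x') :=
        Set.preimage_symmDiff _ _
      rw [hsplit]
      have h1 : sliceV (n+1) (steiner (n+1) (schwarz (n+1) G)) x'
          = sliceV (n+1) (steiner (n+1) G) x' := by
        rw [sliceV_steiner, sliceV_steiner, hx']
      rw [h1, hGst, symmDiff_self]
      exact measure_empty
    rw [lintegral_congr_ae haez, lintegral_zero]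
  exact ⟨part1, part2⟩
end

section
/- Let d ≥ 2. There exists a constant C < ∞ depending only on d with the following property: let E₁, E₂, E₃ ⊆ ℝ^d be Lebesgue measurable sets of finite positive measure satisfying E_j = E_j^{†★}, and let k₁,k₂,k₃ ∈ ℤ be such that |E_{j,k_j}| > 0 for each j. Then 𝒯(E_{1,k₁}, E_{2,k₂}, E_{3,k₃}) ≤ C·θ·∏_{j=1}^3 |E_{j,k_j}|^{2/3}, where θ = (min_{m≠n} 2^{−|k_m−k_n|/3}) · (min_{μ≠ν} (|E'_{μ,k_μ}| / |E'_{ν,k_ν}|)^{1/3}), the minima taken over all pairs of distinct indices in {1,2,3}. -/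
open MeasureTheory Metric Filter
open scoped ENNReal Pointwise Topology

open Set

set_option linter.unusedSectionVars false
set_option linter.unusedVariables false

noncomputable section

section Lgen

variable {α : Type*} [MeasureSpace α] [AddCommGroup α] [MeasurableAdd₂ α] [MeasurableNeg α]
  [SigmaFinite (volume : Measure α)]
  [(volume : Measure α).IsAddLeftInvariant] [(volume : Measure α).IsNegInvariant]

/-- indicator with value 1 in ℝ≥0∞ -/
def indi (A : Set α) : α → ℝ≥0∞ := A.indicator 1

noncomputable def Lfun (A B C : Set α) : ℝ≥0∞ :=
  ∫⁻ x, ∫⁻ y, indi A x * indi B y * indi C (-x - y)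

lemma lint_indi {A : Set α} (hA : MeasurableSet A) : ∫⁻ x, indi A x = volume A := by
  unfold indi; rw [lintegral_indicator_one hA]

lemma indi_meas {A : Set α} (hA : MeasurableSet A) : Measurable (indi A) :=
  measurable_one.indicator hA

lemma indi_le_one (A : Set α) (x : α) : indi A x ≤ 1 := by
  unfold indi; by_cases h : x ∈ A <;> simp [h]

lemma hinv (x : α) : MeasurePreserving (fun y : α => -x - y) volume volume := by
  have h1 : MeasurePreserving (fun y : α => -y) volume volume :=
    Measure.measurePreserving_neg volume
  have h2 : MeasurePreserving (fun y : α => -x + y) volume volume :=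
    measurePreserving_add_left volume (-x)
  have := h2.comp h1
  convert this using 1
  funext y; simp [Function.comp, sub_eq_add_neg]

lemma lint_ind_comp {C : Set α} (hC : MeasurableSet C) (x : α) :
    ∫⁻ y, indi C (-x - y) = volume C := by
  rw [(hinv x).lintegral_comp (indi_meas hC)]
  simp [indi, lintegral_indicator_one hC]

lemma Lfun_meas_inner {A B C : Set α} (hA : MeasurableSet A) (hB : MeasurableSet B)
    (hC : MeasurableSet C) :
    Measurable (fun p : α × α => indi A p.1 * indi B p.2 * indi C (-p.1 - p.2)) := by
  apply Measurable.mul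
  · exact ((indi_meas hA).comp measurable_fst).mul ((indi_meas hB).comp measurable_snd)
  · exact (indi_meas hC).comp (measurable_fst.neg.sub measurable_snd)

lemma Lfun_le_AB {A B C : Set α} (hA : MeasurableSet A) (hB : MeasurableSet B) :
    Lfun A B C ≤ volume A * volume B := by
  unfold Lfun
  calc ∫⁻ x, ∫⁻ y, indi A x * indi B y * indi C (-x - y)
      ≤ ∫⁻ x, ∫⁻ y, indi A x * indi B y := by
        refine lintegral_mono fun x => lintegral_mono fun y => ?_
        calc indi A x * indi B y * indi C (-x - y) ≤ indi A x * indi B y * 1 :=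
              mul_le_mul_right (indi_le_one _ _) _
        _ = indi A x * indi B y := mul_one _
    _ = ∫⁻ x, indi A x * volume B := by
        refine lintegral_congr fun x => ?_
        rw [lintegral_const_mul _ (indi_meas hB), lint_indi hB]
    _ = volume A * volume B := by
        rw [lintegral_mul_const _ (indi_meas hA), lint_indi hA]

lemma Lfun_le_AC {A B C : Set α} (hA : MeasurableSet A) (hC : MeasurableSet C) :
    Lfun A B C ≤ volume A * volume C := by
  unfold Lfun
  calc ∫⁻ x, ∫⁻ y, indi A x * indi B y * indi C (-x - y)
      ≤ ∫⁻ x, ∫⁻ y, indi A x * indi C (-x - y) := by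
        refine lintegral_mono fun x => lintegral_mono fun y => ?_
        calc indi A x * indi B y * indi C (-x - y)
            ≤ indi A x * 1 * indi C (-x - y) := by
              exact mul_le_mul_left (mul_le_mul_right (indi_le_one _ _) _) _
        _ = indi A x * indi C (-x - y) := by rw [mul_one]
    _ = ∫⁻ x, indi A x * volume C := by
        refine lintegral_congr fun x => ?_
        have hm : Measurable fun y : α => indi C (-x - y) :=
          (indi_meas hC).comp (measurable_const.sub measurable_id)
        rw [lintegral_const_mul _ hm, lint_ind_comp hC x]
    _ = volume A * volume C := by
        rw [lintegral_mul_const _ (indi_meas hA), lint_indi hA]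

lemma Lfun_le_BC {A B C : Set α} (hA : MeasurableSet A) (hB : MeasurableSet B)
    (hC : MeasurableSet C) :
    Lfun A B C ≤ volume B * volume C := by
  unfold Lfun
  rw [lintegral_lintegral_swap (Lfun_meas_inner hA hB hC).aemeasurable]
  calc ∫⁻ y, ∫⁻ x, indi A x * indi B y * indi C (-x - y)
      ≤ ∫⁻ y, ∫⁻ x, indi B y * indi C (-x - y) := by
        refine lintegral_mono fun y => lintegral_mono fun x => ?_
        calc indi A x * indi B y * indi C (-x - y)
            ≤ 1 * indi B y * indi C (-x - y) := by
              exact mul_le_mul_left (mul_le_mul_left (indi_le_one _ _) _) _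
        _ = indi B y * indi C (-x - y) := by rw [one_mul]
    _ = ∫⁻ y, indi B y * volume C := by
        refine lintegral_congr fun y => ?_
        have hm : Measurable fun x : α => indi C (-x - y) :=
          (indi_meas hC).comp (measurable_id.neg.sub measurable_const)
        rw [lintegral_const_mul _ hm]
        congr 1
        have h2 : ∀ x : α, -x - y = -y - x := by intro x; abel
        simp_rw [h2]
        exact lint_ind_comp hC y
    _ = volume B * volume C := by
        rw [lintegral_mul_const _ (indi_meas hB), lint_indi hB]

lemma Lfun_mono {A B C A' B' C' : Set α} (h1 : A ⊆ A') (h2 : B ⊆ B') (h3 : C ⊆ C') :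
    Lfun A B C ≤ Lfun A' B' C' := by
  have key : ∀ (S S' : Set α) (z : α), S ⊆ S' → indi S z ≤ indi S' z := by
    intro S S' z h
    exact Set.indicator_le_indicator_of_subset h (fun _ => zero_le) z
  refine lintegral_mono fun x => lintegral_mono fun y => ?_
  exact mul_le_mul' (mul_le_mul' (key _ _ _ h1) (key _ _ _ h2)) (key _ _ _ h3)

end Lgen
section EquivN
variable (n : ℕ)

/-- measurable equiv `Euc n × ℝ ≃ Euc (n+1)` realizing `join`. -/
def eEquiv : (Euc n × ℝ) ≃ᵐ Euc (n+1) :=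
  ((MeasurableEquiv.prodCongr ((MeasurableEquiv.toLp 2 (Fin n → ℝ)).symm) (MeasurableEquiv.refl ℝ)).trans
    MeasurableEquiv.prodComm).trans
    (((MeasurableEquiv.piFinSuccAbove (fun _ : Fin (n+1) => ℝ) (Fin.last n)).symm).trans
      ((MeasurableEquiv.toLp 2 (Fin (n+1) → ℝ)).symm).symm)

lemma eEquiv_apply (p : Euc n × ℝ) : eEquiv n p = join (n+1) p.1 p.2 := by
  obtain ⟨x', t⟩ := p
  ext i
  have : eEquiv n (x', t) = WithLp.toLp 2 (Fin.insertNth (Fin.last n) t (fun j => x' (Fin.cast rfl j))) := by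
    simp [eEquiv, MeasurableEquiv.trans_apply, MeasurableEquiv.piFinSuccAbove_symm_apply]
    rfl
  rw [this, WithLp.ofLp_toLp]
  induction i using Fin.lastCases with
  | last => ?_
  | cast j => ?_
  · rw [Fin.insertNth_apply_same]
    simp [_root_.join]
  · rw [show Fin.castSucc j = (Fin.last n).succAbove j by simp, Fin.insertNth_apply_succAbove]
    rw [Fin.succAbove_last]
    simp only [_root_.join, Fin.coe_castSucc]
    rw [dif_pos (show (j:ℕ) < n+1-1 from j.2)]
    rfl

lemma eEquiv_mp : MeasurePreserving (eEquiv n) volume volume := by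
  unfold eEquiv
  have h1 : MeasurePreserving
      (MeasurableEquiv.prodCongr ((MeasurableEquiv.toLp 2 (Fin n → ℝ)).symm) (MeasurableEquiv.refl ℝ))
      volume volume := by
    rw [show (volume : Measure (Euc n × ℝ)) = Measure.prod volume volume from Measure.volume_eq_prod _ _,
        show (volume : Measure ((Fin n → ℝ) × ℝ)) = Measure.prod volume volume from Measure.volume_eq_prod _ _]
    exact (EuclideanSpace.volume_preserving_symm_measurableEquiv_toLp (Fin n)).prod (MeasurePreserving.id _)
  have h2 : MeasurePreserving (MeasurableEquiv.prodComm : (Fin n → ℝ) × ℝ ≃ᵐ ℝ × (Fin n → ℝ)) volume volume := by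
    rw [show (volume : Measure ((Fin n → ℝ) × ℝ)) = Measure.prod volume volume from Measure.volume_eq_prod _ _,
        show (volume : Measure (ℝ × (Fin n → ℝ))) = Measure.prod volume volume from Measure.volume_eq_prod _ _]
    exact Measure.measurePreserving_swap
  have h3 : MeasurePreserving
      ((MeasurableEquiv.piFinSuccAbove (fun _ : Fin (n+1) => ℝ) (Fin.last n)).symm)
      volume volume := by
    have := (volume_preserving_piFinSuccAbove (fun _ : Fin (n+1) => ℝ) (Fin.last n)).symm
    rw [show (volume : Measure (ℝ × (Fin n → ℝ))) = Measure.prod volume volume from Measure.volume_eq_prod _ _]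
    exact this
  have h4 : MeasurePreserving (((MeasurableEquiv.toLp 2 (Fin (n+1) → ℝ)).symm).symm) volume volume :=
    (EuclideanSpace.volume_preserving_symm_measurableEquiv_toLp (Fin (n+1))).symm
  exact ((h4.comp h3).comp (h2.comp h1) : _)

lemma eEquiv_add_neg (n : ℕ) (p q : Euc n × ℝ) :
    -eEquiv n p - eEquiv n q = eEquiv n (-p.1 - q.1, -p.2 - q.2) := by
  ext i
  simp only [eEquiv_apply]
  show -(_root_.join (n+1) p.1 p.2 i) - _root_.join (n+1) q.1 q.2 i
      = _root_.join (n+1) (-p.1 - q.1) (-p.2 - q.2) i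
  simp only [_root_.join]
  by_cases h : (i:ℕ) < n+1-1
  · rw [dif_pos h, dif_pos h, dif_pos h]; rfl
  · rw [dif_neg h, dif_neg h, dif_neg h]

lemma indi_image {n : ℕ} (S : Set (Euc n)) (I : Set ℝ) (p : Euc n × ℝ) :
    indi (eEquiv n '' (S ×ˢ I)) (eEquiv n p) = indi S p.1 * indi I p.2 := by
  by_cases h1 : p.1 ∈ S <;> by_cases h2 : p.2 ∈ I <;>
    simp [indi, Set.indicator_apply, (eEquiv n).injective.mem_set_image, Set.mem_prod, h1, h2]

lemma vol_image_prod {n : ℕ} {S : Set (Euc n)} {I : Set ℝ}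
    (hS : MeasurableSet S) (hI : MeasurableSet I) :
    volume (eEquiv n '' (S ×ˢ I)) = volume S * volume I := by
  rw [MeasurableEquiv.image_eq_preimage_symm,
    ((eEquiv_mp n).symm (eEquiv n)).measure_preimage (hS.prod hI).nullMeasurableSet,
    Measure.volume_eq_prod _ _, Measure.prod_prod]

lemma measurableSet_image_prod {n : ℕ} {S : Set (Euc n)} {I : Set ℝ}
    (hS : MeasurableSet S) (hI : MeasurableSet I) :
    MeasurableSet (eEquiv n '' (S ×ˢ I)) := by
  rw [MeasurableEquiv.image_eq_preimage_symm]
  exact (eEquiv n).symm.measurable (hS.prod hI)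

lemma Lfun_factor (n : ℕ) {S₁ S₂ S₃ : Set (Euc n)} {I₁ I₂ I₃ : Set ℝ}
    (hS₁ : MeasurableSet S₁) (hS₂ : MeasurableSet S₂) (hS₃ : MeasurableSet S₃)
    (hI₁ : MeasurableSet I₁) (hI₂ : MeasurableSet I₂) (hI₃ : MeasurableSet I₃) :
    Lfun (eEquiv n '' (S₁ ×ˢ I₁)) (eEquiv n '' (S₂ ×ˢ I₂)) (eEquiv n '' (S₃ ×ˢ I₃))
      = Lfun S₁ S₂ S₃ * Lfun I₁ I₂ I₃ := by
  have hP₁ := measurableSet_image_prod hS₁ hI₁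
  have hP₂ := measurableSet_image_prod hS₂ hI₂
  have hP₃ := measurableSet_image_prod hS₃ hI₃
  set P₁ := eEquiv n '' (S₁ ×ˢ I₁)
  set P₂ := eEquiv n '' (S₂ ×ˢ I₂)
  set P₃ := eEquiv n '' (S₃ ×ˢ I₃)
  have hF : Measurable (fun x : Euc (n+1) => ∫⁻ y, indi P₁ x * indi P₂ y * indi P₃ (-x - y)) :=
    (Lfun_meas_inner hP₁ hP₂ hP₃).lintegral_prod_right'
  have hΦ : Measurable (fun a : Euc n => ∫⁻ b, indi S₂ b * indi S₃ (-a - b)) :=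
    Measurable.lintegral_prod_right'
      (((indi_meas hS₂).comp measurable_snd).mul
        ((indi_meas hS₃).comp (measurable_fst.neg.sub measurable_snd)))
  have hΨ : Measurable (fun s : ℝ => ∫⁻ t, indi I₂ t * indi I₃ (-s - t)) :=
    Measurable.lintegral_prod_right'
      (((indi_meas hI₂).comp measurable_snd).mul
        ((indi_meas hI₃).comp (measurable_fst.neg.sub measurable_snd)))
  have step1 : ∀ p : Euc n × ℝ,
      (∫⁻ y, indi P₁ (eEquiv n p) * indi P₂ y * indi P₃ (-(eEquiv n p) - y))
      = (indi S₁ p.1 * ∫⁻ b, indi S₂ b * indi S₃ (-p.1 - b))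
        * (indi I₁ p.2 * ∫⁻ t, indi I₂ t * indi I₃ (-p.2 - t)) := by
    intro p
    have hg : Measurable (fun y : Euc (n+1) =>
        indi P₁ (eEquiv n p) * indi P₂ y * indi P₃ (-(eEquiv n p) - y)) := by
      apply Measurable.mul
      · exact (measurable_const.mul (indi_meas hP₂))
      · exact (indi_meas hP₃).comp (measurable_const.sub measurable_id)
    rw [← (eEquiv_mp n).lintegral_comp hg]
    have key : ∀ q : Euc n × ℝ,
        indi P₁ (eEquiv n p) * indi P₂ (eEquiv n q) * indi P₃ (-(eEquiv n p) - eEquiv n q)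
        = (indi S₁ p.1 * (indi S₂ q.1 * indi S₃ (-p.1 - q.1)))
          * (indi I₁ p.2 * (indi I₂ q.2 * indi I₃ (-p.2 - q.2))) := by
      intro q
      rw [eEquiv_add_neg]
      rw [show indi P₁ (eEquiv n p) = indi S₁ p.1 * indi I₁ p.2 from indi_image _ _ _,
          show indi P₂ (eEquiv n q) = indi S₂ q.1 * indi I₂ q.2 from indi_image _ _ _,
          show indi P₃ (eEquiv n (-p.1 - q.1, -p.2 - q.2))
            = indi S₃ (-p.1 - q.1) * indi I₃ (-p.2 - q.2) from indi_image _ _ _]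
      ring
    refine Eq.trans (lintegral_congr key) ?_
    rw [Measure.volume_eq_prod (Euc n) ℝ]
    have hu : AEMeasurable (fun b : Euc n => indi S₁ p.1 * (indi S₂ b * indi S₃ (-p.1 - b)))
        (volume : Measure (Euc n)) := by
      apply Measurable.aemeasurable
      exact measurable_const.mul ((indi_meas hS₂).mul
        ((indi_meas hS₃).comp (measurable_const.sub measurable_id)))
    have hw : AEMeasurable (fun t : ℝ => indi I₁ p.2 * (indi I₂ t * indi I₃ (-p.2 - t)))
        (volume : Measure ℝ) := by
      apply Measurable.aemeasurable
      exact measurable_const.mul ((indi_meas hI₂).mul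
        ((indi_meas hI₃).comp (measurable_const.sub measurable_id)))
    refine Eq.trans (lintegral_prod_mul hu hw) ?_
    congr 1
    · exact lintegral_const_mul _ ((indi_meas hS₂).mul
        ((indi_meas hS₃).comp (measurable_const.sub measurable_id)))
    · exact lintegral_const_mul _ ((indi_meas hI₂).mul
        ((indi_meas hI₃).comp (measurable_const.sub measurable_id)))
  unfold Lfun
  rw [← (eEquiv_mp n).lintegral_comp hF]
  refine Eq.trans (lintegral_congr step1) ?_
  rw [Measure.volume_eq_prod (Euc n) ℝ]
  have hu : AEMeasurable (fun a : Euc n => indi S₁ a * ∫⁻ b, indi S₂ b * indi S₃ (-a - b))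
      (volume : Measure (Euc n)) := ((indi_meas hS₁).mul hΦ).aemeasurable
  have hw : AEMeasurable (fun s : ℝ => indi I₁ s * ∫⁻ t, indi I₂ t * indi I₃ (-s - t))
      (volume : Measure ℝ) := ((indi_meas hI₁).mul hΨ).aemeasurable
  refine Eq.trans (lintegral_prod_mul hu hw) ?_
  congr 1
  · simp_rw [mul_assoc]
    exact lintegral_congr fun a => (lintegral_const_mul _ ((indi_meas hS₂).mul
        ((indi_meas hS₃).comp (measurable_const.sub measurable_id)))).symm
  · simp_rw [mul_assoc]
    exact lintegral_congr fun s => (lintegral_const_mul _ ((indi_meas hI₂).mul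
        ((indi_meas hI₃).comp (measurable_const.sub measurable_id)))).symm

lemma ofReal_ind3 {d : ℕ} (A B C : Set (Euc d)) (x y : Euc d) :
    ENNReal.ofReal (A.indicator (fun _ => (1:ℝ)) x * B.indicator (fun _ => (1:ℝ)) y *
      C.indicator (fun _ => (1:ℝ)) (-x - y)) = indi A x * indi B y * indi C (-x - y) := by
  by_cases h1 : x ∈ A <;> by_cases h2 : y ∈ B <;> by_cases h3 : (-x - y) ∈ C <;>
    simp [indi, Set.indicator_apply, h1, h2, h3]

lemma Ttri_le_Lfun {d : ℕ} {A B C : Set (Euc d)} (hA : MeasurableSet A) (hB : MeasurableSet B)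
    (hC : MeasurableSet C) (hfin : Lfun A B C ≠ ⊤) : Ttri A B C ≤ (Lfun A B C).toReal := by
  have hmeasR : ∀ x : Euc d, AEStronglyMeasurable (fun y : Euc d =>
      A.indicator (fun _ => (1:ℝ)) x * B.indicator (fun _ => (1:ℝ)) y *
        C.indicator (fun _ => (1:ℝ)) (-x - y)) volume := by
    intro x
    apply Measurable.aestronglyMeasurable
    exact (measurable_const.mul (measurable_const.indicator hB)).mul
      ((measurable_const.indicator hC).comp (measurable_const.sub measurable_id))
  have inner_eq : ∀ x : Euc d, (∫ y : Euc d, A.indicator (fun _ => (1:ℝ)) x *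
      B.indicator (fun _ => (1:ℝ)) y * C.indicator (fun _ => (1:ℝ)) (-x - y))
      = (∫⁻ y, indi A x * indi B y * indi C (-x - y)).toReal := by
    intro x
    rw [integral_eq_lintegral_of_nonneg_ae ?_ (hmeasR x)]
    · congr 1
      exact lintegral_congr fun y => ofReal_ind3 A B C x y
    · filter_upwards with y
      have n1 : (0:ℝ) ≤ A.indicator (fun _ => (1:ℝ)) x := Set.indicator_nonneg (fun _ _ => zero_le_one) _
      have n2 : (0:ℝ) ≤ B.indicator (fun _ => (1:ℝ)) y := Set.indicator_nonneg (fun _ _ => zero_le_one) _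
      have n3 : (0:ℝ) ≤ C.indicator (fun _ => (1:ℝ)) (-x - y) := Set.indicator_nonneg (fun _ _ => zero_le_one) _
      positivity
  unfold Ttri
  simp_rw [inner_eq]
  have hg : Measurable (fun x : Euc d => ∫⁻ y, indi A x * indi B y * indi C (-x - y)) :=
    (Lfun_meas_inner hA hB hC).lintegral_prod_right'
  rw [integral_eq_lintegral_of_nonneg_ae (by filter_upwards with x; exact ENNReal.toReal_nonneg)
    (Measurable.aestronglyMeasurable hg.ennreal_toReal)]
  apply ENNReal.toReal_mono hfin
  exact lintegral_mono fun x => ENNReal.ofReal_toReal_le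

section Layers
variable {n : ℕ}

lemma join_projHead_lastC (x : Euc (n+1)) :
    join (n+1) (projHead (n+1) x) (lastC (n+1) x) = x := by
  ext i
  simp only [_root_.join, projHead, lastC]
  by_cases h : (i:ℕ) < n+1-1
  · rw [dif_pos h]
  · rw [dif_neg h, dif_pos (Nat.succ_pos n)]
    have : (i:ℕ) = n := by omega
    have hi : (⟨n+1-1, Nat.sub_lt (Nat.succ_pos n) one_pos⟩ : Fin (n+1)) = i := Fin.ext (by simp; omega)
    rw [hi]

lemma projHead_join (a : Euc n) (t : ℝ) : projHead (n+1) (join (n+1) a t) = a := by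
  ext i
  simp only [projHead, _root_.join]
  rw [dif_pos (show ((i:ℕ)) < n+1-1 from i.2)]

lemma lastC_join (a : Euc n) (t : ℝ) : lastC (n+1) (join (n+1) a t) = t := by
  simp only [lastC, _root_.join]
  rw [dif_pos (Nat.succ_pos n), dif_neg (by simp)]

lemma mem_steiner_iff (F : Set (Euc (n+1))) (x : Euc (n+1)) :
    x ∈ steiner (n+1) F ↔ 0 < volume (sliceV (n+1) F (projHead (n+1) x)) ∧
      ENNReal.ofReal (2 * |lastC (n+1) x|) ≤ volume (sliceV (n+1) F (projHead (n+1) x)) := by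
  constructor
  · rintro ⟨x', t, hx, h1, h2⟩
    rw [hx, projHead_join, lastC_join]
    exact ⟨h1, h2⟩
  · rintro ⟨h1, h2⟩
    exact ⟨projHead (n+1) x, lastC (n+1) x, (join_projHead_lastC x).symm, h1, h2⟩

lemma sliceV_steiner (F : Set (Euc (n+1))) (x' : Euc n) :
    sliceV (n+1) (steiner (n+1) F) x' = {t : ℝ | 0 < volume (sliceV (n+1) F x') ∧
      ENNReal.ofReal (2 * |t|) ≤ volume (sliceV (n+1) F x')} := by
  ext t
  show join (n+1) x' t ∈ steiner (n+1) F ↔ _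
  rw [mem_steiner_iff, projHead_join, lastC_join]
  rfl

lemma vol_sliceV_steiner (F : Set (Euc (n+1))) (x' : Euc n) :
    volume (sliceV (n+1) (steiner (n+1) F) x') = volume (sliceV (n+1) F x') := by
  rw [sliceV_steiner]
  set h := volume (sliceV (n+1) F x') with hh
  by_cases h0 : h = 0
  · have : {t : ℝ | 0 < h ∧ ENNReal.ofReal (2*|t|) ≤ h} = (∅ : Set ℝ) := by
      ext t; simp [h0]
    rw [this, measure_empty, h0]
  by_cases htop : h = ⊤
  · have : {t : ℝ | 0 < h ∧ ENNReal.ofReal (2*|t|) ≤ h} = Set.univ := by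
      ext t; simp [htop]
    rw [this, Real.volume_univ, htop]
  · have hpos : 0 < h := lt_of_le_of_ne zero_le (Ne.symm h0)
    have hsetEq : {t : ℝ | 0 < h ∧ ENNReal.ofReal (2*|t|) ≤ h}
        = Set.Icc (-(h.toReal/2)) (h.toReal/2) := by
      ext t
      simp only [Set.mem_setOf_eq, Set.mem_Icc, hpos, true_and,
        ENNReal.ofReal_le_iff_le_toReal htop]
      rw [show (2*|t| ≤ h.toReal ↔ |t| ≤ h.toReal/2) from by constructor <;> intro <;> linarith,
        abs_le]
    rw [hsetEq, Real.volume_Icc, show h.toReal/2 - -(h.toReal/2) = h.toReal by ring,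
      ENNReal.ofReal_toReal htop]

end Layers

section Layers2
variable {n : ℕ}

lemma sliceV_eq_preimage (E : Set (Euc (n+1))) (x' : Euc n) :
    sliceV (n+1) E x' = Prod.mk x' ⁻¹' (eEquiv n ⁻¹' E) := by
  ext t
  show join (n+1) x' t ∈ E ↔ eEquiv n (x', t) ∈ E
  rw [eEquiv_apply]

lemma measurable_sliceVol {E : Set (Euc (n+1))} (hE : MeasurableSet E) :
    Measurable fun x' : Euc n => volume (sliceV (n+1) E x') := by
  simp_rw [sliceV_eq_preimage]
  exact measurable_measure_prodMk_left ((eEquiv n).measurable hE)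

lemma measurable_layerBase {E : Set (Euc (n+1))} (hE : MeasurableSet E) (k : ℤ) :
    MeasurableSet (layerBase (n+1) E k) := by
  have h1 : layerBase (n+1) E k =
      {x' : Euc n | ENNReal.ofReal ((2:ℝ) ^ k) ≤ volume (sliceV (n+1) E x')} ∩
      {x' : Euc n | volume (sliceV (n+1) E x') < ENNReal.ofReal ((2:ℝ) ^ (k+1))} := rfl
  rw [h1]
  exact (measurableSet_le measurable_const (measurable_sliceVol hE)).inter
    (measurableSet_lt (measurable_sliceVol hE) measurable_const)

lemma measurable_projHead : Measurable (projHead (n+1)) := by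
  refine (MeasurableEquiv.toLp 2 (Fin (n+1-1) → ℝ)).measurable.comp ?_
  apply measurable_pi_lambda
  intro i
  exact (measurable_pi_apply _).comp (MeasurableEquiv.toLp 2 (Fin (n+1) → ℝ)).symm.measurable

lemma measurable_layer {E : Set (Euc (n+1))} (hE : MeasurableSet E) (k : ℤ) :
    MeasurableSet (layer (n+1) E k) := by
  have : layer (n+1) E k = E ∩ projHead (n+1) ⁻¹' (layerBase (n+1) E k) := rfl
  rw [this]
  exact hE.inter (measurable_projHead (measurable_layerBase hE k))

variable {E : Set (Euc (n+1))} (hE : E = dagStar (n+1) E)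

include hE in
lemma vol_sliceV_dagStar (x' : Euc n) :
    volume (sliceV (n+1) E x') = volume (sliceV (n+1) (schwarz (n+1) E) x') := by
  nth_rewrite 1 [hE]
  exact vol_sliceV_steiner _ x'

include hE in
lemma layer_subset_prod (k : ℤ) :
    layer (n+1) E k ⊆ eEquiv n '' ((layerBase (n+1) E k) ×ˢ Set.Icc (-((2:ℝ)^k)) ((2:ℝ)^k)) := by
  rintro x ⟨hxE, hxB⟩
  refine ⟨(projHead (n+1) x, lastC (n+1) x), ⟨hxB, ?_⟩, by
    rw [eEquiv_apply]; exact join_projHead_lastC x⟩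
  rw [hE] at hxE
  obtain ⟨h1, h2⟩ := (mem_steiner_iff _ x).mp hxE
  obtain ⟨hB1, hB2⟩ := hxB
  rw [vol_sliceV_dagStar hE] at hB1 hB2
  have hflt : ENNReal.ofReal (2 * |lastC (n+1) x|) < ENNReal.ofReal ((2:ℝ)^(k+1)) :=
    lt_of_le_of_lt h2 hB2
  have h2k : (0:ℝ) < 2^(k+1) := by positivity
  have : 2 * |lastC (n+1) x| < (2:ℝ)^(k+1) := by
    by_contra hcon
    push_neg at hcon
    exact absurd (ENNReal.ofReal_le_ofReal hcon) (not_le.mpr hflt)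
  have habs : |lastC (n+1) x| ≤ (2:ℝ)^k := by
    have : (2:ℝ)^(k+1) = 2 * 2^k := by
      rw [zpow_add_one₀ (by norm_num : (2:ℝ) ≠ 0)]; ring
    nlinarith [abs_nonneg (lastC (n+1) x)]
  exact Set.mem_Icc.mpr (abs_le.mp habs)

include hE in
lemma prod_subset_layer (k : ℤ) :
    eEquiv n '' ((layerBase (n+1) E k) ×ˢ Set.Icc (-((2:ℝ)^k/2)) ((2:ℝ)^k/2)) ⊆
      layer (n+1) E k := by
  rintro x ⟨⟨x', t⟩, ⟨hB, ht⟩, rfl⟩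
  rw [eEquiv_apply]
  obtain ⟨hB1, hB2⟩ := hB
  rw [vol_sliceV_dagStar hE] at hB1 hB2
  have h2k : (0:ℝ) < 2^k := by positivity
  constructor
  · rw [hE]
    refine (mem_steiner_iff _ _).mpr ?_
    rw [projHead_join, lastC_join]
    refine ⟨lt_of_lt_of_le (ENNReal.ofReal_pos.mpr h2k) hB1, ?_⟩
    refine le_trans (ENNReal.ofReal_le_ofReal ?_) hB1
    obtain ⟨ht1, ht2⟩ := Set.mem_Icc.mp ht
    have : |t| ≤ (2:ℝ)^k/2 := abs_le.mpr ⟨by linarith, ht2⟩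
    linarith
  · show projHead (n+1) (join (n+1) x' t) ∈ layerBase (n+1) E k
    rw [projHead_join]
    exact ⟨by rw [vol_sliceV_dagStar hE]; exact hB1, by rw [vol_sliceV_dagStar hE]; exact hB2⟩
end Layers2

section VolBounds
variable {n : ℕ} {E : Set (Euc (n+1))} (hE : E = dagStar (n+1) E) (hEm : MeasurableSet E)

include hE hEm in
lemma vol_layer_le (k : ℤ) :
    volume (layer (n+1) E k) ≤
      volume (layerBase (n+1) E k) * ENNReal.ofReal (2*(2:ℝ)^k) := by
  refine (measure_mono (layer_subset_prod hE k)).trans_eq ?_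
  rw [vol_image_prod (n := n) (measurable_layerBase hEm k) measurableSet_Icc, Real.volume_Icc]
  congr 1
  ring

include hE hEm in
lemma vol_layer_ge (k : ℤ) :
    volume (layerBase (n+1) E k) * ENNReal.ofReal ((2:ℝ)^k) ≤ volume (layer (n+1) E k) := by
  refine le_trans (le_of_eq ?_) (measure_mono (prod_subset_layer hE k))
  rw [vol_image_prod (n := n) (measurable_layerBase hEm k) measurableSet_Icc, Real.volume_Icc]
  congr 1
  ring

end VolBounds

section Arith

lemma cube_le {u v : ℝ} (hu : 0 ≤ u) (hv : 0 ≤ v) (h : u^3 ≤ v^3) : u ≤ v := by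
  by_contra hc
  push_neg at hc
  exact absurd h (not_le.mpr (pow_lt_pow_left₀ hc hv (by norm_num)))

lemma core_arith {a b c M P : ℝ} (ha : 0 < a) (hb : 0 < b) (hc : 0 < c) (hM : 0 ≤ M)
    (h1 : M ≤ a*b) (h2 : M ≤ a*c) (hP : P = a*b*c) : M^3 ≤ (a/b) * P^2 := by
  have key : (a/b) * P^2 = a^3*b*c^2 := by
    subst hP; field_simp
  rw [key]
  rcases le_total c b with h|h
  · calc M^3 ≤ (a*c)^3 := pow_le_pow_left₀ hM h2 3
    _ = a^3*c^2*c := by ring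
    _ ≤ a^3*c^2*b := by
        apply mul_le_mul_of_nonneg_left h (by positivity)
    _ = a^3*b*c^2 := by ring
  · calc M^3 ≤ (a*b)^3 := pow_le_pow_left₀ hM h1 3
    _ = a^3*b*(b*b) := by ring
    _ ≤ a^3*b*(c*c) := by
        apply mul_le_mul_of_nonneg_left (mul_le_mul h h hb.le hc.le) (by positivity)
    _ = a^3*b*c^2 := by ring

lemma rpow_third_cube {x : ℝ} (hx : 0 ≤ x) : (x ^ ((1:ℝ)/3))^3 = x := by
  rw [← Real.rpow_natCast (x ^ ((1:ℝ)/3)) 3, ← Real.rpow_mul hx]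
  norm_num

lemma rpow_23_cube {x : ℝ} (hx : 0 ≤ x) : (x ^ ((2:ℝ)/3))^3 = x^2 := by
  rw [← Real.rpow_natCast (x ^ ((2:ℝ)/3)) 3, ← Real.rpow_mul hx]
  norm_num

lemma rpow_div3_cube (x : ℝ) : ((2:ℝ)^(x/3))^3 = (2:ℝ)^x := by
  rw [← Real.rpow_natCast ((2:ℝ) ^ (x/3)) 3, ← Real.rpow_mul (by norm_num : (0:ℝ) ≤ 2)]
  norm_num

lemma pair_bound {a b c M P : ℝ} (ha : 0 < a) (hb : 0 < b) (hc : 0 < c) (hM : 0 ≤ M)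
    (h1 : M ≤ a*b) (h2 : M ≤ a*c) (hP : P = a*b*c) :
    M ≤ (a/b) ^ ((1:ℝ)/3) * P ^ ((2:ℝ)/3) := by
  have hPpos : 0 < P := by rw [hP]; positivity
  apply cube_le hM (by positivity)
  rw [mul_pow, rpow_third_cube (by positivity), rpow_23_cube hPpos.le]
  exact core_arith ha hb hc hM h1 h2 hP

/-- the `b`-side arithmetic inequality -/
lemma min3_le_theta {b₁ b₂ b₃ : ℝ} (h1 : 0 < b₁) (h2 : 0 < b₂) (h3 : 0 < b₃) :
    min (b₁*b₂) (min (b₁*b₃) (b₂*b₃)) ≤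
      (min ((b₁/b₂) ^ ((1:ℝ)/3))
        (min ((b₂/b₁) ^ ((1:ℝ)/3))
          (min ((b₁/b₃) ^ ((1:ℝ)/3))
            (min ((b₃/b₁) ^ ((1:ℝ)/3))
              (min ((b₂/b₃) ^ ((1:ℝ)/3)) ((b₃/b₂) ^ ((1:ℝ)/3))))))) *
      (b₁*b₂*b₃) ^ ((2:ℝ)/3) := by
  set M := min (b₁*b₂) (min (b₁*b₃) (b₂*b₃)) with hM
  have hM0 : 0 ≤ M := le_min (by positivity) (le_min (by positivity) (by positivity))
  have hMb12 : M ≤ b₁*b₂ := min_le_left _ _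
  have hMb13 : M ≤ b₁*b₃ := le_trans (min_le_right _ _) (min_le_left _ _)
  have hMb23 : M ≤ b₂*b₃ := le_trans (min_le_right _ _) (min_le_right _ _)
  have hMb21 : M ≤ b₂*b₁ := by rw [mul_comm]; exact hMb12
  have hMb31 : M ≤ b₃*b₁ := by rw [mul_comm]; exact hMb13
  have hMb32 : M ≤ b₃*b₂ := by rw [mul_comm]; exact hMb23
  have hQ : (0:ℝ) ≤ (b₁*b₂*b₃) ^ ((2:ℝ)/3) := by positivity
  rw [min_mul_of_nonneg _ _ hQ, min_mul_of_nonneg _ _ hQ, min_mul_of_nonneg _ _ hQ,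
      min_mul_of_nonneg _ _ hQ, min_mul_of_nonneg _ _ hQ]
  refine le_min (pair_bound h1 h2 h3 hM0 hMb12 hMb13 rfl)
    (le_min (pair_bound h2 h1 h3 hM0 hMb21 hMb23 (by ring))
      (le_min (pair_bound h1 h3 h2 hM0 hMb13 hMb12 (by ring))
        (le_min (pair_bound h3 h1 h2 hM0 hMb31 hMb32 (by ring))
          (le_min (pair_bound h2 h3 h1 hM0 hMb23 hMb21 (by ring))
            (pair_bound h3 h2 h1 hM0 hMb32 hMb31 (by ring))))))

end Arith

section Arith2

lemma two_rpow_ratio (i j : ℤ) (hij : i ≤ j) :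
    (2:ℝ) ^ (-(|(i:ℝ) - (j:ℝ)|) / 3) = ((2:ℝ)^i / (2:ℝ)^j) ^ ((1:ℝ)/3) := by
  have h1 : |(i:ℝ) - (j:ℝ)| = (j:ℝ) - (i:ℝ) := by
    rw [abs_of_nonpos (sub_nonpos.mpr (by exact_mod_cast hij))]
    ring
  rw [h1, show -((j:ℝ) - (i:ℝ))/3 = ((i:ℝ) - (j:ℝ)) * ((1:ℝ)/3) by ring,
    Real.rpow_mul (by norm_num : (0:ℝ) ≤ 2), Real.rpow_sub (by norm_num : (0:ℝ) < 2),
    Real.rpow_intCast, Real.rpow_intCast]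

lemma min3_le_theta1 (k₁ k₂ k₃ : ℤ) :
    min ((2:ℝ)^k₁*(2:ℝ)^k₂) (min ((2:ℝ)^k₁*(2:ℝ)^k₃) ((2:ℝ)^k₂*(2:ℝ)^k₃)) ≤
      (min ((2:ℝ) ^ (-(|(k₁:ℝ) - (k₂:ℝ)|) / 3))
        (min ((2:ℝ) ^ (-(|(k₁:ℝ) - (k₃:ℝ)|) / 3)) ((2:ℝ) ^ (-(|(k₂:ℝ) - (k₃:ℝ)|) / 3)))) *
      ((2:ℝ)^k₁*(2:ℝ)^k₂*(2:ℝ)^k₃) ^ ((2:ℝ)/3) := by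
  have hc1 : (0:ℝ) < 2^k₁ := by positivity
  have hc2 : (0:ℝ) < 2^k₂ := by positivity
  have hc3 : (0:ℝ) < 2^k₃ := by positivity
  set c₁ := (2:ℝ)^k₁
  set c₂ := (2:ℝ)^k₂
  set c₃ := (2:ℝ)^k₃
  set M := min (c₁*c₂) (min (c₁*c₃) (c₂*c₃)) with hM
  have hM0 : 0 ≤ M := le_min (by positivity) (le_min (by positivity) (by positivity))
  have hM12 : M ≤ c₁*c₂ := min_le_left _ _
  have hM13 : M ≤ c₁*c₃ := le_trans (min_le_right _ _) (min_le_left _ _)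
  have hM23 : M ≤ c₂*c₃ := le_trans (min_le_right _ _) (min_le_right _ _)
  have hM21 : M ≤ c₂*c₁ := by rw [mul_comm]; exact hM12
  have hM31 : M ≤ c₃*c₁ := by rw [mul_comm]; exact hM13
  have hM32 : M ≤ c₃*c₂ := by rw [mul_comm]; exact hM23
  have hQ : (0:ℝ) ≤ (c₁*c₂*c₃) ^ ((2:ℝ)/3) := by positivity
  rw [min_mul_of_nonneg _ _ hQ, min_mul_of_nonneg _ _ hQ]
  refine le_min ?_ (le_min ?_ ?_)
  · rcases le_total k₁ k₂ with h|h
    · rw [two_rpow_ratio k₁ k₂ h]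
      exact pair_bound hc1 hc2 hc3 hM0 hM12 hM13 rfl
    · rw [abs_sub_comm, two_rpow_ratio k₂ k₁ h]
      exact pair_bound hc2 hc1 hc3 hM0 hM21 hM23 (by ring)
  · rcases le_total k₁ k₃ with h|h
    · rw [two_rpow_ratio k₁ k₃ h]
      exact pair_bound hc1 hc3 hc2 hM0 hM13 hM12 (by ring)
    · rw [abs_sub_comm, two_rpow_ratio k₃ k₁ h]
      exact pair_bound hc3 hc1 hc2 hM0 hM31 hM32 (by ring)
  · rcases le_total k₂ k₃ with h|h
    · rw [two_rpow_ratio k₂ k₃ h]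
      exact pair_bound hc2 hc3 hc1 hM0 hM23 hM21 (by ring)
    · rw [abs_sub_comm, two_rpow_ratio k₃ k₂ h]
      exact pair_bound hc3 hc2 hc1 hM0 hM32 hM31 (by ring)

end Arith2


end EquivN
end

/-- Lemma 5.2: the layered trilinear estimate. -/
theorem layer_trilinear_bound (d : ℕ) (hd : 2 ≤ d) :
    ∃ C : ℝ, 0 < C ∧
      ∀ E₁ E₂ E₃ : Set (Euc d),
        MeasurableSet E₁ → MeasurableSet E₂ → MeasurableSet E₃ →
        0 < volume E₁ → volume E₁ < ⊤ →
        0 < volume E₂ → volume E₂ < ⊤ →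
        0 < volume E₃ → volume E₃ < ⊤ →
        E₁ = dagStar d E₁ → E₂ = dagStar d E₂ → E₃ = dagStar d E₃ →
        ∀ k₁ k₂ k₃ : ℤ,
          0 < volume (layer d E₁ k₁) → 0 < volume (layer d E₂ k₂) →
          0 < volume (layer d E₃ k₃) →
          Ttri (layer d E₁ k₁) (layer d E₂ k₂) (layer d E₃ k₃) ≤
            C *
            (min ((2:ℝ) ^ (-(|(k₁:ℝ) - (k₂:ℝ)|) / 3))
              (min ((2:ℝ) ^ (-(|(k₁:ℝ) - (k₃:ℝ)|) / 3))
                ((2:ℝ) ^ (-(|(k₂:ℝ) - (k₃:ℝ)|) / 3)))) *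
            (min (((volume (layerBase d E₁ k₁)).toReal /
                    (volume (layerBase d E₂ k₂)).toReal) ^ ((1:ℝ)/3))
              (min (((volume (layerBase d E₂ k₂)).toReal /
                    (volume (layerBase d E₁ k₁)).toReal) ^ ((1:ℝ)/3))
                (min (((volume (layerBase d E₁ k₁)).toReal /
                      (volume (layerBase d E₃ k₃)).toReal) ^ ((1:ℝ)/3))
                  (min (((volume (layerBase d E₃ k₃)).toReal /
                        (volume (layerBase d E₁ k₁)).toReal) ^ ((1:ℝ)/3))
                    (min (((volume (layerBase d E₂ k₂)).toReal /
                          (volume (layerBase d E₃ k₃)).toReal) ^ ((1:ℝ)/3))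
                      (((volume (layerBase d E₃ k₃)).toReal /
                        (volume (layerBase d E₂ k₂)).toReal) ^ ((1:ℝ)/3))))))) *
            ((volume (layer d E₁ k₁)).toReal ^ ((2:ℝ)/3) *
             (volume (layer d E₂ k₂)).toReal ^ ((2:ℝ)/3) *
             (volume (layer d E₃ k₃)).toReal ^ ((2:ℝ)/3)) := by
  obtain ⟨n, rfl⟩ : ∃ n, d = n + 1 := ⟨d - 1, by omega⟩
  refine ⟨4, by norm_num, ?_⟩
  intro E₁ E₂ E₃ hm₁ hm₂ hm₃ hv₁ hv₁' hv₂ hv₂' hv₃ hv₃' hd₁ hd₂ hd₃ k₁ k₂ k₃ hl₁ hl₂ hl₃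
  -- abbreviations
  set B₁ : Set (Euc n) := layerBase (n+1) E₁ k₁ with hB₁def
  set B₂ : Set (Euc n) := layerBase (n+1) E₂ k₂ with hB₂def
  set B₃ : Set (Euc n) := layerBase (n+1) E₃ k₃ with hB₃def
  set L₁ := layer (n+1) E₁ k₁ with hL₁def
  set L₂ := layer (n+1) E₂ k₂ with hL₂def
  set L₃ := layer (n+1) E₃ k₃ with hL₃def
  have hB₁m : MeasurableSet B₁ := measurable_layerBase hm₁ k₁
  have hB₂m : MeasurableSet B₂ := measurable_layerBase hm₂ k₂
  have hB₃m : MeasurableSet B₃ := measurable_layerBase hm₃ k₃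
  have hL₁m : MeasurableSet L₁ := measurable_layer hm₁ k₁
  have hL₂m : MeasurableSet L₂ := measurable_layer hm₂ k₂
  have hL₃m : MeasurableSet L₃ := measurable_layer hm₃ k₃
  have hLsub : ∀ (E : Set (Euc (n+1))) (k : ℤ), layer (n+1) E k ⊆ E := fun E k => Set.sep_subset _ _
  have hLfin₁ : volume L₁ < ⊤ := lt_of_le_of_lt (measure_mono (hLsub E₁ k₁)) hv₁'
  have hLfin₂ : volume L₂ < ⊤ := lt_of_le_of_lt (measure_mono (hLsub E₂ k₂)) hv₂'
  have hLfin₃ : volume L₃ < ⊤ := lt_of_le_of_lt (measure_mono (hLsub E₃ k₃)) hv₃'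
  have hup₁ := vol_layer_le hd₁ hm₁ k₁
  have hup₂ := vol_layer_le hd₂ hm₂ k₂
  have hup₃ := vol_layer_le hd₃ hm₃ k₃
  have hlow₁ := vol_layer_ge hd₁ hm₁ k₁
  have hlow₂ := vol_layer_ge hd₂ hm₂ k₂
  have hlow₃ := vol_layer_ge hd₃ hm₃ k₃
  -- base measures in (0,∞)
  have hBneT : ∀ (B : Set (Euc n)) (L : Set (Euc (n+1))) (k : ℤ),
      volume B * ENNReal.ofReal ((2:ℝ)^k) ≤ volume L → volume L < ⊤ → volume B ≠ ⊤ := by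
    intro B L k hlow hfin htop
    rw [htop, ENNReal.top_mul (ENNReal.ofReal_pos.mpr (by positivity : (0:ℝ) < 2^k)).ne'] at hlow
    exact absurd hfin (not_lt.mpr hlow)
  have hBne0 : ∀ (B : Set (Euc n)) (L : Set (Euc (n+1))) (k : ℤ),
      volume L ≤ volume B * ENNReal.ofReal (2*(2:ℝ)^k) → 0 < volume L → volume B ≠ 0 := by
    intro B L k hup hpos h0
    rw [h0, zero_mul] at hup
    exact absurd (le_antisymm hup zero_le) hpos.ne'
  have hB₁T := hBneT B₁ L₁ k₁ hlow₁ hLfin₁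
  have hB₂T := hBneT B₂ L₂ k₂ hlow₂ hLfin₂
  have hB₃T := hBneT B₃ L₃ k₃ hlow₃ hLfin₃
  have hB₁0 := hBne0 B₁ L₁ k₁ hup₁ hl₁
  have hB₂0 := hBne0 B₂ L₂ k₂ hup₂ hl₂
  have hB₃0 := hBne0 B₃ L₃ k₃ hup₃ hl₃
  -- real quantities
  set b₁ := (volume B₁).toReal with hb₁def
  set b₂ := (volume B₂).toReal with hb₂def
  set b₃ := (volume B₃).toReal with hb₃def
  set v₁ := (volume L₁).toReal with hv₁def
  set v₂ := (volume L₂).toReal with hv₂def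
  set v₃ := (volume L₃).toReal with hv₃def
  have hb₁ : 0 < b₁ := ENNReal.toReal_pos hB₁0 hB₁T
  have hb₂ : 0 < b₂ := ENNReal.toReal_pos hB₂0 hB₂T
  have hb₃ : 0 < b₃ := ENNReal.toReal_pos hB₃0 hB₃T
  have hcb : ∀ (B : Set (Euc n)) (L : Set (Euc (n+1))) (k : ℤ),
      volume B * ENNReal.ofReal ((2:ℝ)^k) ≤ volume L → volume L < ⊤ →
      (volume B).toReal * (2:ℝ)^k ≤ (volume L).toReal := by
    intro B L k hlow hfin
    have := ENNReal.toReal_mono hfin.ne hlow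
    rwa [ENNReal.toReal_mul, ENNReal.toReal_ofReal (by positivity : (0:ℝ) ≤ 2^k)] at this
  have hcb₁ := hcb B₁ L₁ k₁ hlow₁ hLfin₁
  have hcb₂ := hcb B₂ L₂ k₂ hlow₂ hLfin₂
  have hcb₃ := hcb B₃ L₃ k₃ hlow₃ hLfin₃
  -- key inequality via factorization
  set I₁ : Set ℝ := Set.Icc (-((2:ℝ)^k₁)) ((2:ℝ)^k₁) with hI₁def
  set I₂ : Set ℝ := Set.Icc (-((2:ℝ)^k₂)) ((2:ℝ)^k₂) with hI₂def
  set I₃ : Set ℝ := Set.Icc (-((2:ℝ)^k₃)) ((2:ℝ)^k₃) with hI₃def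
  have hkey : Lfun L₁ L₂ L₃ ≤ Lfun B₁ B₂ B₃ * Lfun I₁ I₂ I₃ := by
    refine le_trans (Lfun_mono (layer_subset_prod hd₁ k₁) (layer_subset_prod hd₂ k₂)
      (layer_subset_prod hd₃ k₃)) ?_
    exact le_of_eq (Lfun_factor n hB₁m hB₂m hB₃m measurableSet_Icc measurableSet_Icc
      measurableSet_Icc)
  have hLBfin : Lfun B₁ B₂ B₃ ≠ ⊤ :=
    ne_top_of_le_ne_top (ENNReal.mul_ne_top hB₁T hB₂T) (Lfun_le_AB hB₁m hB₂m)
  have hIvol : ∀ k : ℤ, volume (Set.Icc (-((2:ℝ)^k)) ((2:ℝ)^k)) = ENNReal.ofReal (2*(2:ℝ)^k) := by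
    intro k
    rw [Real.volume_Icc]
    congr 1
    ring
  have hLIfin : Lfun I₁ I₂ I₃ ≠ ⊤ := by
    refine ne_top_of_le_ne_top ?_ (Lfun_le_AB measurableSet_Icc measurableSet_Icc)
    rw [hI₁def, hI₂def, hIvol k₁, hIvol k₂]
    exact ENNReal.mul_ne_top ENNReal.ofReal_ne_top ENNReal.ofReal_ne_top
  have hfinL : Lfun L₁ L₂ L₃ ≠ ⊤ := ne_top_of_le_ne_top (ENNReal.mul_ne_top hLBfin hLIfin) hkey
  -- real-side bounds for the two factors
  have HB : (Lfun B₁ B₂ B₃).toReal ≤ min (b₁*b₂) (min (b₁*b₃) (b₂*b₃)) := by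
    refine le_min ?_ (le_min ?_ ?_)
    · calc (Lfun B₁ B₂ B₃).toReal ≤ (volume B₁ * volume B₂).toReal :=
            ENNReal.toReal_mono (ENNReal.mul_ne_top hB₁T hB₂T) (Lfun_le_AB hB₁m hB₂m)
        _ = b₁*b₂ := ENNReal.toReal_mul
    · calc (Lfun B₁ B₂ B₃).toReal ≤ (volume B₁ * volume B₃).toReal :=
            ENNReal.toReal_mono (ENNReal.mul_ne_top hB₁T hB₃T) (Lfun_le_AC hB₁m hB₃m)
        _ = b₁*b₃ := ENNReal.toReal_mul
    · calc (Lfun B₁ B₂ B₃).toReal ≤ (volume B₂ * volume B₃).toReal :=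
            ENNReal.toReal_mono (ENNReal.mul_ne_top hB₂T hB₃T) (Lfun_le_BC hB₁m hB₂m hB₃m)
        _ = b₂*b₃ := ENNReal.toReal_mul
  have hIval : ∀ k : ℤ, (volume (Set.Icc (-((2:ℝ)^k)) ((2:ℝ)^k))).toReal = 2*(2:ℝ)^k := by
    intro k
    rw [hIvol k, ENNReal.toReal_ofReal (by positivity)]
  have hIne : ∀ k : ℤ, volume (Set.Icc (-((2:ℝ)^k)) ((2:ℝ)^k)) ≠ ⊤ := by
    intro k
    rw [hIvol k]
    exact ENNReal.ofReal_ne_top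
  have HI : (Lfun I₁ I₂ I₃).toReal ≤
      min ((2*(2:ℝ)^k₁)*(2*(2:ℝ)^k₂)) (min ((2*(2:ℝ)^k₁)*(2*(2:ℝ)^k₃))
        ((2*(2:ℝ)^k₂)*(2*(2:ℝ)^k₃))) := by
    refine le_min ?_ (le_min ?_ ?_)
    · calc (Lfun I₁ I₂ I₃).toReal ≤ (volume I₁ * volume I₂).toReal :=
            ENNReal.toReal_mono (ENNReal.mul_ne_top (hIne k₁) (hIne k₂))
              (Lfun_le_AB measurableSet_Icc measurableSet_Icc)
        _ = (2*(2:ℝ)^k₁)*(2*(2:ℝ)^k₂) := by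
            rw [ENNReal.toReal_mul, hI₁def, hI₂def, hIval, hIval]
    · calc (Lfun I₁ I₂ I₃).toReal ≤ (volume I₁ * volume I₃).toReal :=
            ENNReal.toReal_mono (ENNReal.mul_ne_top (hIne k₁) (hIne k₃))
              (Lfun_le_AC measurableSet_Icc measurableSet_Icc)
        _ = (2*(2:ℝ)^k₁)*(2*(2:ℝ)^k₃) := by
            rw [ENNReal.toReal_mul, hI₁def, hI₃def, hIval, hIval]
    · calc (Lfun I₁ I₂ I₃).toReal ≤ (volume I₂ * volume I₃).toReal :=
            ENNReal.toReal_mono (ENNReal.mul_ne_top (hIne k₂) (hIne k₃))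
              (Lfun_le_BC measurableSet_Icc measurableSet_Icc measurableSet_Icc)
        _ = (2*(2:ℝ)^k₂)*(2*(2:ℝ)^k₃) := by
            rw [ENNReal.toReal_mul, hI₂def, hI₃def, hIval, hIval]
  -- arithmetic
  set θ₁ := min ((2:ℝ) ^ (-(|(k₁:ℝ) - (k₂:ℝ)|) / 3))
      (min ((2:ℝ) ^ (-(|(k₁:ℝ) - (k₃:ℝ)|) / 3)) ((2:ℝ) ^ (-(|(k₂:ℝ) - (k₃:ℝ)|) / 3))) with hθ₁def
  set θ₂ := min ((b₁/b₂) ^ ((1:ℝ)/3)) (min ((b₂/b₁) ^ ((1:ℝ)/3)) (min ((b₁/b₃) ^ ((1:ℝ)/3))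
      (min ((b₃/b₁) ^ ((1:ℝ)/3)) (min ((b₂/b₃) ^ ((1:ℝ)/3)) ((b₃/b₂) ^ ((1:ℝ)/3)))))) with hθ₂def
  have hθ₁0 : 0 ≤ θ₁ := le_min (by positivity) (le_min (by positivity) (by positivity))
  have hθ₂0 : 0 ≤ θ₂ := le_min (by positivity) (le_min (by positivity) (le_min (by positivity)
      (le_min (by positivity) (le_min (by positivity) (by positivity)))))
  have H2 := min3_le_theta hb₁ hb₂ hb₃
  have H1 := min3_le_theta1 k₁ k₂ k₃
  have hVC : ((2:ℝ)^k₁*(2:ℝ)^k₂*(2:ℝ)^k₃) ^ ((2:ℝ)/3) * (b₁*b₂*b₃) ^ ((2:ℝ)/3) ≤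
      v₁ ^ ((2:ℝ)/3) * v₂ ^ ((2:ℝ)/3) * v₃ ^ ((2:ℝ)/3) := by
    have e1 : ((2:ℝ)^k₁*(2:ℝ)^k₂*(2:ℝ)^k₃) ^ ((2:ℝ)/3) * (b₁*b₂*b₃) ^ ((2:ℝ)/3)
        = ((2:ℝ)^k₁*b₁) ^ ((2:ℝ)/3) * ((2:ℝ)^k₂*b₂) ^ ((2:ℝ)/3) * ((2:ℝ)^k₃*b₃) ^ ((2:ℝ)/3) := by
      rw [← Real.mul_rpow (by positivity) (by positivity),
        ← Real.mul_rpow (by positivity) (by positivity),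
        ← Real.mul_rpow (by positivity) (by positivity)]
      congr 1
      ring
    rw [e1]
    have r1 : ((2:ℝ)^k₁*b₁) ^ ((2:ℝ)/3) ≤ v₁ ^ ((2:ℝ)/3) :=
      Real.rpow_le_rpow (by positivity) (by rw [mul_comm]; exact hcb₁) (by norm_num)
    have r2 : ((2:ℝ)^k₂*b₂) ^ ((2:ℝ)/3) ≤ v₂ ^ ((2:ℝ)/3) :=
      Real.rpow_le_rpow (by positivity) (by rw [mul_comm]; exact hcb₂) (by norm_num)
    have r3 : ((2:ℝ)^k₃*b₃) ^ ((2:ℝ)/3) ≤ v₃ ^ ((2:ℝ)/3) :=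
      Real.rpow_le_rpow (by positivity) (by rw [mul_comm]; exact hcb₃) (by norm_num)
    have := mul_le_mul (mul_le_mul r1 r2 (by positivity) (by positivity)) r3 (by positivity)
      (by positivity)
    exact this
  -- put it together
  have hIfour : min ((2*(2:ℝ)^k₁)*(2*(2:ℝ)^k₂)) (min ((2*(2:ℝ)^k₁)*(2*(2:ℝ)^k₃))
      ((2*(2:ℝ)^k₂)*(2*(2:ℝ)^k₃)))
      = (min ((2:ℝ)^k₁*(2:ℝ)^k₂) (min ((2:ℝ)^k₁*(2:ℝ)^k₃) ((2:ℝ)^k₂*(2:ℝ)^k₃))) * 4 := by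
    rw [show (2*(2:ℝ)^k₁)*(2*(2:ℝ)^k₂) = ((2:ℝ)^k₁*(2:ℝ)^k₂)*4 by ring,
      show (2*(2:ℝ)^k₁)*(2*(2:ℝ)^k₃) = ((2:ℝ)^k₁*(2:ℝ)^k₃)*4 by ring,
      show (2*(2:ℝ)^k₂)*(2*(2:ℝ)^k₃) = ((2:ℝ)^k₂*(2:ℝ)^k₃)*4 by ring,
      ← min_mul_of_nonneg _ _ (by norm_num : (0:ℝ) ≤ 4),
      ← min_mul_of_nonneg _ _ (by norm_num : (0:ℝ) ≤ 4)]
  calc Ttri L₁ L₂ L₃ ≤ (Lfun L₁ L₂ L₃).toReal := Ttri_le_Lfun hL₁m hL₂m hL₃m hfinL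
    _ ≤ (Lfun B₁ B₂ B₃ * Lfun I₁ I₂ I₃).toReal :=
        ENNReal.toReal_mono (ENNReal.mul_ne_top hLBfin hLIfin) hkey
    _ = (Lfun B₁ B₂ B₃).toReal * (Lfun I₁ I₂ I₃).toReal := ENNReal.toReal_mul
    _ ≤ (min (b₁*b₂) (min (b₁*b₃) (b₂*b₃)))
        * (min ((2*(2:ℝ)^k₁)*(2*(2:ℝ)^k₂)) (min ((2*(2:ℝ)^k₁)*(2*(2:ℝ)^k₃))
          ((2*(2:ℝ)^k₂)*(2*(2:ℝ)^k₃)))) :=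
        mul_le_mul HB HI ENNReal.toReal_nonneg (le_trans ENNReal.toReal_nonneg HB)
    _ = (min (b₁*b₂) (min (b₁*b₃) (b₂*b₃)))
        * ((min ((2:ℝ)^k₁*(2:ℝ)^k₂) (min ((2:ℝ)^k₁*(2:ℝ)^k₃) ((2:ℝ)^k₂*(2:ℝ)^k₃))) * 4) := by
        rw [hIfour]
    _ ≤ (θ₂ * (b₁*b₂*b₃) ^ ((2:ℝ)/3))
        * ((θ₁ * ((2:ℝ)^k₁*(2:ℝ)^k₂*(2:ℝ)^k₃) ^ ((2:ℝ)/3)) * 4) := by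
        refine mul_le_mul H2 (mul_le_mul_of_nonneg_right H1 (by norm_num)) ?_ (by positivity)
        have : (0:ℝ) ≤ min ((2:ℝ)^k₁*(2:ℝ)^k₂) (min ((2:ℝ)^k₁*(2:ℝ)^k₃) ((2:ℝ)^k₂*(2:ℝ)^k₃)) :=
          le_min (by positivity) (le_min (by positivity) (by positivity))
        positivity
    _ = 4 * θ₁ * θ₂ * (((2:ℝ)^k₁*(2:ℝ)^k₂*(2:ℝ)^k₃) ^ ((2:ℝ)/3) * (b₁*b₂*b₃) ^ ((2:ℝ)/3)) := by
        ring
    _ ≤ 4 * θ₁ * θ₂ * (v₁ ^ ((2:ℝ)/3) * v₂ ^ ((2:ℝ)/3) * v₃ ^ ((2:ℝ)/3)) := by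
        refine mul_le_mul_of_nonneg_left hVC ?_
        positivity
end
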